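/- arXiv:1305.4037 — 5 statements merged into one kernel-verified Lean document; each statement's English description precedes it below -/
import Mathlib

section
/- If b is a bounded complex-valued para-accretive function on ℝⁿ, then 1/b is essentially bounded; that is, there exists a constant c > 0 such that |b(x)| ≥ c for almost every x ∈ ℝⁿ. -/
open MeasureTheory Metric

/-- If `b` is a bounded measurable para-accretive function on `ℝⁿ` (para-accretivity stated
with respect to cubes, realized as closed balls in the sup-norm on `Fin n → ℝ`), then `1/b`
is essentially bounded: there is `c > 0` with `c ≤ |b x|` for a.e. `x`. -/
theorem tb_product_para_accretive_essentially_bounded_below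
    (n : ℕ) (b : (Fin n → ℝ) → ℂ) (hmeas : Measurable b)
    (B : ℝ) (hB : ∀ x, ‖b x‖ ≤ B)
    (C γ : ℝ) (hC : 0 < C) (hγ : 0 < γ)
    (hpara : ∀ (x : Fin n → ℝ) (r : ℝ), 0 < r →
      ∃ Q' : Set (Fin n → ℝ), MeasurableSet Q' ∧ Q' ⊆ closedBall x r ∧
        γ * (volume (closedBall x r)).toReal ≤ (volume Q').toReal ∧
        C ≤ ((volume (closedBall x r)).toReal)⁻¹ * ‖∫ y in Q', b y‖) :
    ∃ c : ℝ, 0 < c ∧ ∀ᵐ x ∂(volume : Measure (Fin n → ℝ)), c ≤ ‖b x‖ := by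
  set B' : ℝ := max B 1 with hB'def
  have hB'pos : (0:ℝ) < B' := lt_of_lt_of_le one_pos (le_max_right _ _)
  have hBB' : ∀ x, ‖b x‖ ≤ B' := fun x => (hB x).trans (le_max_left _ _)
  set ε : ℝ := min (C / (4 * B')) (1/2) with hεdef
  have hεpos : 0 < ε := lt_min (div_pos hC (by positivity)) (by norm_num)
  have hεhalf : ε ≤ 1/2 := min_le_right _ _
  have hB'ε : B' * ε ≤ C / 4 := by
    have h1 : ε ≤ C / (4 * B') := min_le_left _ _
    have : B' * ε ≤ B' * (C / (4 * B')) := by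
      exact mul_le_mul_of_nonneg_left h1 hB'pos.le
    calc B' * ε ≤ B' * (C / (4 * B')) := this
      _ = C / 4 := by field_simp
  refine ⟨C/2, by linarith, ?_⟩
  set E : Set (Fin n → ℝ) := {x | ‖b x‖ < C/2} with hEdef
  have hEmeas : MeasurableSet E := measurableSet_lt hmeas.norm measurable_const
  rw [ae_iff]
  have hset : {x : Fin n → ℝ | ¬ C/2 ≤ ‖b x‖} = E := by
    ext x; simp [hEdef, not_le]
  rw [hset]
  by_contra hne
  -- density point
  have hdens := Besicovitch.ae_tendsto_measure_inter_div_of_measurableSet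
    (volume : Measure (Fin n → ℝ)) hEmeas
  obtain ⟨x, hxE, hx⟩ : ∃ x ∈ E, Filter.Tendsto
      (fun r => volume (E ∩ closedBall x r) / volume (closedBall x r))
      (nhdsWithin 0 (Set.Ioi 0)) (nhds (E.indicator 1 x)) := by
    by_contra hcon
    push_neg at hcon
    apply hne
    refine measure_mono_null (fun y hy => ?_) hdens
    exact fun hten => hcon y hy hten
  rw [Set.indicator_of_mem hxE] at hx
  simp only [Pi.one_apply] at hx
  have hlt1 : ENNReal.ofReal (1 - ε) < 1 := by
    rw [show (1 : ENNReal) = ENNReal.ofReal 1 by simp]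
    exact ENNReal.ofReal_lt_ofReal_iff one_pos |>.2 (by linarith)
  obtain ⟨r, hratio, hr⟩ :=
    ((hx.eventually (eventually_gt_nhds hlt1)).and self_mem_nhdsWithin).exists
  set Q : Set (Fin n → ℝ) := closedBall x r with hQdef
  have hQfin : volume Q < ⊤ := measure_closedBall_lt_top
  have hQpos : 0 < volume Q := measure_closedBall_pos _ _ hr
  set vQ : ℝ := (volume Q).toReal with hvQdef
  have hvQpos : 0 < vQ := ENNReal.toReal_pos hQpos.ne' hQfin.ne
  -- from ratio inequality:
  have hmul : ENNReal.ofReal (1 - ε) * volume Q < volume (E ∩ Q) := by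
    rw [ENNReal.lt_div_iff_mul_lt (Or.inl hQpos.ne') (Or.inl hQfin.ne)] at hratio
    exact hratio
  have hEQfin : volume (E ∩ Q) ≠ ⊤ := (lt_of_le_of_lt (measure_mono Set.inter_subset_right) hQfin).ne
  have hEQ : (1 - ε) * vQ < (volume (E ∩ Q)).toReal := by
    have := ENNReal.toReal_lt_toReal (by finiteness) hEQfin |>.2 hmul
    rwa [ENNReal.toReal_mul, ENNReal.toReal_ofReal (by linarith)] at this
  have hQiE : volume (Q ∩ E) ≠ ⊤ := ((measure_mono Set.inter_subset_left).trans_lt hQfin).ne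
  have hQdE : volume (Q \ E) ≠ ⊤ := ((measure_mono Set.diff_subset).trans_lt hQfin).ne
  have hsplit : (volume (Q ∩ E)).toReal + (volume (Q \ E)).toReal = vQ := by
    rw [← ENNReal.toReal_add hQiE hQdE, measure_inter_add_diff Q hEmeas]
  have hdiff : (volume (Q \ E)).toReal < ε * vQ := by
    rw [Set.inter_comm] at hEQ
    nlinarith
  -- apply para-accretivity
  obtain ⟨Q', hQ'meas, hQ'sub, _, hQ'int⟩ := hpara x r hr
  have hQ'fin : volume Q' < ⊤ := lt_of_le_of_lt (measure_mono hQ'sub) hQfin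
  have hint : IntegrableOn b Q' volume := by
    apply Measure.integrableOn_of_bounded hQ'fin.ne hmeas.aestronglyMeasurable
    exact Filter.Eventually.of_forall fun y => hBB' y
  have hintsplit : (∫ y in Q' ∩ E, b y) + (∫ y in Q' \ E, b y) = ∫ y in Q', b y :=
    integral_inter_add_diff hEmeas hint
  have h1 : ‖∫ y in Q' ∩ E, b y‖ ≤ (C/2) * (volume (Q' ∩ E)).toReal := by
    apply norm_setIntegral_le_of_norm_le_const
      (lt_of_le_of_lt (measure_mono Set.inter_subset_left) hQ'fin)
    · exact fun y hy => (hy.2 : ‖b y‖ < C/2).le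
  have h2 : ‖∫ y in Q' \ E, b y‖ ≤ B' * (volume (Q' \ E)).toReal := by
    apply norm_setIntegral_le_of_norm_le_const
      (lt_of_le_of_lt (measure_mono Set.diff_subset) hQ'fin)
    · exact fun y _ => hBB' y
  have hm1 : (volume (Q' ∩ E)).toReal ≤ vQ :=
    ENNReal.toReal_mono hQfin.ne (measure_mono fun y hy => hQ'sub hy.1)
  have hm2 : (volume (Q' \ E)).toReal ≤ (volume (Q \ E)).toReal :=
    ENNReal.toReal_mono hQdE (measure_mono fun y hy => ⟨hQ'sub hy.1, hy.2⟩)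
  have hnorm : ‖∫ y in Q', b y‖ < (3 * C / 4) * vQ := by
    rw [← hintsplit]
    calc ‖(∫ y in Q' ∩ E, b y) + (∫ y in Q' \ E, b y)‖
        ≤ ‖∫ y in Q' ∩ E, b y‖ + ‖∫ y in Q' \ E, b y‖ := norm_add_le _ _
      _ ≤ (C/2) * vQ + B' * (volume (Q \ E)).toReal := by
          have := mul_le_mul_of_nonneg_left hm2 hB'pos.le
          have := mul_le_mul_of_nonneg_left hm1 (by linarith : (0:ℝ) ≤ C/2)
          linarith
      _ < (C/2) * vQ + B' * (ε * vQ) := by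
          have := mul_lt_mul_of_pos_left hdiff hB'pos
          linarith
      _ ≤ (3 * C / 4) * vQ := by nlinarith
  have hinv : vQ⁻¹ * vQ = 1 := inv_mul_cancel₀ hvQpos.ne'
  have hfinal : vQ⁻¹ * ‖∫ y in Q', b y‖ < 3 * C / 4 := by
    have := mul_lt_mul_of_pos_left hnorm (inv_pos.2 hvQpos)
    calc vQ⁻¹ * ‖∫ y in Q', b y‖ < vQ⁻¹ * ((3 * C / 4) * vQ) := this
      _ = 3 * C / 4 := by field_simp
  rw [← hvQdef] at hQ'int
  linarith
end

section
/- Let j₀, k₀ ∈ ℤ and s < β. Suppose a family G_{j,k} of functions on ℝⁿ×ℝ^m satisfies ‖G_{jk}‖_{L^∞} ≤ A 2^{−(j+k)s}, ‖G_{jk}‖_{(L^∞,λ^β)} ≤ A 2^{−js}2^{k(β−s)}, ‖G_{jk}‖_{(λ^β,L^∞)} ≤ A 2^{j(β−s)}2^{−ks}, and ‖G_{jk}‖_β ≤ A 2^{(j+k)(β−s)}. Then for any points with 2^{−j₀} ≤ |x₁−y₁| ≤ 2^{−j₀+1} and 2^{−k₀} ≤ |x₂−y₂| ≤ 2^{−k₀+1},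 the double difference of Σ_{j,k} G_{jk} satisfies |Σ_{j,k}[G_{jk}(x₁,x₂)−G_{jk}(y₁,x₂)−G_{jk}(x₁,y₂)+G_{jk}(y₁,y₂)]| ≤ C·A·|x₁−y₁|^s|x₂−y₂|^s, with C depending only on s, β. -/
open MeasureTheory

noncomputable abbrev E (n : ℕ) := EuclideanSpace ℝ (Fin n)

lemma tail_sum {t : ℝ} (ht0 : 0 < t) (ht1 : t < 1) (j₀ : ℤ) :
    Summable (fun j : ℤ => if j₀ ≤ j then t ^ j else 0) ∧
    ∑' j : ℤ, (if j₀ ≤ j then t ^ j else 0) ≤ t ^ j₀ * (1 - t)⁻¹ := by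
  set g : ℤ → ℝ := fun j => if j₀ ≤ j then t ^ j else 0 with hg
  set e : ℕ → ℤ := fun i => j₀ + (i : ℤ) with he
  have hinj : Function.Injective e := by intro a b h; simpa [he] using h
  have hvan : ∀ j ∉ Set.range e, g j = 0 := by
    intro j hj
    show (if j₀ ≤ j then t ^ j else 0) = 0
    rw [if_neg]
    intro hle
    exact hj ⟨(j - j₀).toNat, by simp [he, Int.toNat_of_nonneg (sub_nonneg.2 hle)]⟩
  have hcomp : (g ∘ e) = fun i : ℕ => t ^ j₀ * t ^ i := by
    funext i
    have : j₀ ≤ j₀ + (i : ℤ) := by omega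
    simp [hg, he, this, zpow_add₀ ht0.ne', zpow_natCast]
  have hsum' : Summable (g ∘ e) := by
    rw [hcomp]; exact (summable_geometric_of_lt_one ht0.le ht1).mul_left _
  have hsum : Summable g := (hinj.summable_iff hvan).1 hsum'
  refine ⟨hsum, ?_⟩
  have hts : ∑' j : ℤ, g j = t ^ j₀ * (1 - t)⁻¹ := by
    rw [← hinj.tsum_eq (Function.support_subset_iff'.2 hvan)]
    calc ∑' i : ℕ, g (e i) = ∑' i : ℕ, t ^ j₀ * t ^ i := by
          rw [← hcomp]; rfl
      _ = t ^ j₀ * (1 - t)⁻¹ := by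
          rw [tsum_mul_left, tsum_geometric_of_lt_one ht0.le ht1]
  exact hts.le

lemma low_sum {r : ℝ} (hr : 1 < r) (j₀ : ℤ) :
    Summable (fun j : ℤ => if j < j₀ then r ^ j else 0) ∧
    ∑' j : ℤ, (if j < j₀ then r ^ j else 0) ≤ r ^ j₀ * (1 - r⁻¹)⁻¹ := by
  have hr0 : 0 < r := lt_trans one_pos hr
  have ht0 : 0 < r⁻¹ := inv_pos.2 hr0
  have ht1 : r⁻¹ < 1 := inv_lt_one_of_one_lt₀ hr
  obtain ⟨hS, hB⟩ := tail_sum ht0 ht1 (1 - j₀)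
  set g : ℤ → ℝ := fun j => if j < j₀ then r ^ j else 0 with hg
  have hkey : ∀ j : ℤ, g (-j) = (if 1 - j₀ ≤ j then r⁻¹ ^ j else 0) := by
    intro j
    by_cases h : 1 - j₀ ≤ j
    · have h2 : -j < j₀ := by omega
      simp only [hg, h2, if_pos, h, zpow_neg, inv_zpow]
    · have h2 : ¬(-j < j₀) := by omega
      simp [hg, h2, h]
  have hge : g = (fun j : ℤ => if 1 - j₀ ≤ j then r⁻¹ ^ j else 0) ∘ (Equiv.neg ℤ) := by
    funext j; simpa using hkey (-j)
  constructor
  · rw [hge]; exact hS.comp_injective (Equiv.neg ℤ).injective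
  · have heq : ∑' j : ℤ, g j = ∑' j : ℤ, (if 1 - j₀ ≤ j then r⁻¹ ^ j else 0) := by
      rw [hge]
      exact Equiv.tsum_eq (Equiv.neg ℤ) (fun j : ℤ => if 1 - j₀ ≤ j then r⁻¹ ^ j else 0)
    rw [heq]
    refine hB.trans ?_
    have h1 : r⁻¹ ^ (1 - j₀) = r ^ (j₀ - 1) := by
      rw [inv_zpow, ← zpow_neg]; ring_nf
    rw [h1]
    have h2 : r ^ (j₀ - 1) ≤ r ^ j₀ := zpow_le_zpow_right₀ hr.le (by omega)
    have h3 : (0:ℝ) < (1 - r⁻¹)⁻¹ := inv_pos.2 (by linarith)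
    exact mul_le_mul_of_nonneg_right h2 h3.le

set_option maxHeartbeats 1000000 in
lemma tsum_prod_mul {f g : ℤ → ℝ} (hf : Summable f) (hg : Summable g)
    (hf0 : ∀ x, 0 ≤ f x) (hg0 : ∀ x, 0 ≤ g x) :
    ∑' p : ℤ × ℤ, f p.1 * g p.2 = (∑' j, f j) * (∑' k, g k) := by
  have hfg : Summable fun x : ℤ × ℤ => f x.1 * g x.2 := by
    apply Summable.mul_of_nonneg hf hg
    · intro x; exact hf0 x
    · intro x; exact hg0 x
  exact (Summable.tsum_mul_tsum hf hg hfg).symm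

set_option maxHeartbeats 1000000 in
/-- Summation lemma behind (2.2): if a family `G_{jk}` satisfies the four mixed
size/Hölder bounds with constant `A` and exponents `s < β`, then at points at scales
`|x₁-y₁| ≈ 2^{-j₀}`, `|x₂-y₂| ≈ 2^{-k₀}` the double difference of `Σ_{j,k} G_{jk}`
is bounded by `C·A·|x₁-y₁|^s|x₂-y₂|^s`, with `C = C(s,β)`. -/
theorem tb_product_double_difference_summation
    (s β : ℝ) (hs : 0 < s) (hsβ : s < β) :
    ∃ C : ℝ, 0 < C ∧
      ∀ (n m : ℕ) (A : ℝ) (G : ℤ → ℤ → E n × E m → ℂ) (j₀ k₀ : ℤ)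
        (x₁ y₁ : E n) (x₂ y₂ : E m),
        (∀ (j k : ℤ) (x : E n × E m),
          ‖G j k x‖ ≤ A * (2:ℝ) ^ (-((j:ℝ) + (k:ℝ)) * s)) →
        (∀ (j k : ℤ) (z₁ : E n) (z₂ w₂ : E m),
          ‖G j k (z₁, z₂) - G j k (z₁, w₂)‖ ≤
            A * (2:ℝ) ^ (-(j:ℝ) * s) * (2:ℝ) ^ ((k:ℝ) * (β - s)) * ‖z₂ - w₂‖ ^ β) →
        (∀ (j k : ℤ) (z₁ w₁ : E n) (z₂ : E m),
          ‖G j k (z₁, z₂) - G j k (w₁, z₂)‖ ≤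
            A * (2:ℝ) ^ ((j:ℝ) * (β - s)) * (2:ℝ) ^ (-(k:ℝ) * s) * ‖z₁ - w₁‖ ^ β) →
        (∀ (j k : ℤ) (z₁ w₁ : E n) (z₂ w₂ : E m),
          ‖G j k (z₁, z₂) - G j k (w₁, z₂) - G j k (z₁, w₂) + G j k (w₁, w₂)‖ ≤
            A * (2:ℝ) ^ (((j:ℝ) + (k:ℝ)) * (β - s)) * ‖z₁ - w₁‖ ^ β * ‖z₂ - w₂‖ ^ β) →
        (2:ℝ) ^ (-(j₀:ℝ)) ≤ ‖x₁ - y₁‖ → ‖x₁ - y₁‖ ≤ (2:ℝ) ^ (-(j₀:ℝ) + 1) →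
        (2:ℝ) ^ (-(k₀:ℝ)) ≤ ‖x₂ - y₂‖ → ‖x₂ - y₂‖ ≤ (2:ℝ) ^ (-(k₀:ℝ) + 1) →
        ‖∑' p : ℤ × ℤ,
            (G p.1 p.2 (x₁, x₂) - G p.1 p.2 (y₁, x₂) -
              G p.1 p.2 (x₁, y₂) + G p.1 p.2 (y₁, y₂))‖ ≤
          C * A * ‖x₁ - y₁‖ ^ s * ‖x₂ - y₂‖ ^ s := by
  have hβs : 0 < β - s := by linarith
  set ts : ℝ := (2:ℝ) ^ (-s) with hts_def
  set rb : ℝ := (2:ℝ) ^ (β - s) with hrb_def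
  have hts0 : 0 < ts := Real.rpow_pos_of_pos two_pos _
  have hts1 : ts < 1 := Real.rpow_lt_one_of_one_lt_of_neg one_lt_two (by linarith)
  have hrb1 : 1 < rb := (Real.one_lt_rpow_iff_of_pos two_pos).2 (Or.inl ⟨one_lt_two, hβs⟩)
  have hrb0 : 0 < rb := lt_trans one_pos hrb1
  have hrbinv : rb⁻¹ < 1 := inv_lt_one_of_one_lt₀ hrb1
  set Ms : ℝ := (1 - ts)⁻¹ with hMs_def
  set Mb : ℝ := (1 - rb⁻¹)⁻¹ with hMb_def
  have hMs : 0 < Ms := inv_pos.2 (by linarith)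
  have hMb : 0 < Mb := inv_pos.2 (by linarith)
  refine ⟨4*Ms*Ms + 2*Ms*Mb*rb + 2*Mb*Ms*rb + Mb*Mb*rb*rb, by positivity, ?_⟩
  intro n m A G j₀ k₀ x₁ y₁ x₂ y₂ h0 hB2 hB1 hBB hu1 hu2 hv1 hv2
  have hu0 : 0 < ‖x₁ - y₁‖ := lt_of_lt_of_le (Real.rpow_pos_of_pos two_pos _) hu1
  have hv0 : 0 < ‖x₂ - y₂‖ := lt_of_lt_of_le (Real.rpow_pos_of_pos two_pos _) hv1
  have hA : 0 ≤ A := by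
    have h := h0 0 0 (x₁, x₂)
    rw [show -((((0:ℤ)):ℝ) + (((0:ℤ)):ℝ)) * s = 0 by push_cast; ring, Real.rpow_zero,
      mul_one] at h
    exact (norm_nonneg _).trans h
  have hconv1 : ∀ j : ℤ, (2:ℝ) ^ (-(j:ℝ) * s) = ts ^ j := by
    intro j
    rw [hts_def, ← Real.rpow_intCast ((2:ℝ) ^ (-s)) j,
      ← Real.rpow_mul (by norm_num : (0:ℝ) ≤ 2)]
    congr 1; push_cast; ring
  have hconv2 : ∀ j : ℤ, (2:ℝ) ^ ((j:ℝ) * (β - s)) = rb ^ j := by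
    intro j
    rw [hrb_def, ← Real.rpow_intCast ((2:ℝ) ^ (β - s)) j,
      ← Real.rpow_mul (by norm_num : (0:ℝ) ≤ 2)]
    congr 1; push_cast; ring
  obtain ⟨Saj_sum, Saj_le⟩ := tail_sum hts0 hts1 j₀
  obtain ⟨Sak_sum, Sak_le⟩ := tail_sum hts0 hts1 k₀
  obtain ⟨Scj_sum, Scj_le⟩ := low_sum hrb1 j₀
  obtain ⟨Sck_sum, Sck_le⟩ := low_sum hrb1 k₀
  have haj0 : ∀ j : ℤ, 0 ≤ (if j₀ ≤ j then ts ^ j else 0) := by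
    intro j; split
    · exact (zpow_pos hts0 _).le
    · exact le_refl 0
  have hak0 : ∀ k : ℤ, 0 ≤ (if k₀ ≤ k then ts ^ k else 0) := by
    intro k; split
    · exact (zpow_pos hts0 _).le
    · exact le_refl 0
  have hcj0 : ∀ j : ℤ, 0 ≤ (if j < j₀ then rb ^ j else 0) := by
    intro j; split
    · exact (zpow_pos hrb0 _).le
    · exact le_refl 0
  have hck0 : ∀ k : ℤ, 0 ≤ (if k < k₀ then rb ^ k else 0) := by
    intro k; split
    · exact (zpow_pos hrb0 _).le
    · exact le_refl 0
  have huβ : (0:ℝ) ≤ ‖x₁ - y₁‖ ^ β := Real.rpow_nonneg hu0.le _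
  have hvβ : (0:ℝ) ≤ ‖x₂ - y₂‖ ^ β := Real.rpow_nonneg hv0.le _
  -- the pointwise bound
  have hDB : ∀ p : ℤ × ℤ,
      ‖G p.1 p.2 (x₁, x₂) - G p.1 p.2 (y₁, x₂) -
        G p.1 p.2 (x₁, y₂) + G p.1 p.2 (y₁, y₂)‖ ≤
      4*A*((if j₀ ≤ p.1 then ts ^ p.1 else 0) * (if k₀ ≤ p.2 then ts ^ p.2 else 0)) +
      2*A*‖x₂ - y₂‖ ^ β*((if j₀ ≤ p.1 then ts ^ p.1 else 0) * (if p.2 < k₀ then rb ^ p.2 else 0)) +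
      2*A*‖x₁ - y₁‖ ^ β*((if p.1 < j₀ then rb ^ p.1 else 0) * (if k₀ ≤ p.2 then ts ^ p.2 else 0)) +
      A*(‖x₁ - y₁‖ ^ β * ‖x₂ - y₂‖ ^ β)*((if p.1 < j₀ then rb ^ p.1 else 0) * (if p.2 < k₀ then rb ^ p.2 else 0)) := by
    rintro ⟨j, k⟩
    dsimp only
    by_cases hj : j₀ ≤ j <;> by_cases hk : k₀ ≤ k
    · rw [if_pos hj, if_pos hk, if_neg (not_lt.2 hj), if_neg (not_lt.2 hk)]
      simp only [mul_zero, zero_mul, add_zero]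
      have key : A * (2:ℝ) ^ (-((j:ℝ) + (k:ℝ)) * s) = A * (ts ^ j * ts ^ k) := by
        rw [show -((j:ℝ)+(k:ℝ))*s = -(j:ℝ)*s + (-(k:ℝ)*s) by ring,
          Real.rpow_add two_pos, hconv1 j, hconv1 k]
      have h4 : ‖G j k (x₁, x₂) - G j k (y₁, x₂) - G j k (x₁, y₂) + G j k (y₁, y₂)‖ ≤
          ‖G j k (x₁, x₂)‖ + ‖G j k (y₁, x₂)‖ + ‖G j k (x₁, y₂)‖ + ‖G j k (y₁, y₂)‖ := by
        calc ‖G j k (x₁, x₂) - G j k (y₁, x₂) - G j k (x₁, y₂) + G j k (y₁, y₂)‖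
            ≤ ‖G j k (x₁, x₂) - G j k (y₁, x₂) - G j k (x₁, y₂)‖ + ‖G j k (y₁, y₂)‖ :=
              norm_add_le _ _
          _ ≤ ‖G j k (x₁, x₂) - G j k (y₁, x₂)‖ + ‖G j k (x₁, y₂)‖ + ‖G j k (y₁, y₂)‖ :=
              by linarith [norm_sub_le (G j k (x₁, x₂) - G j k (y₁, x₂)) (G j k (x₁, y₂))]
          _ ≤ ‖G j k (x₁, x₂)‖ + ‖G j k (y₁, x₂)‖ + ‖G j k (x₁, y₂)‖ + ‖G j k (y₁, y₂)‖ :=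
              by linarith [norm_sub_le (G j k (x₁, x₂)) (G j k (y₁, x₂))]
      nlinarith [h0 j k (x₁, x₂), h0 j k (y₁, x₂), h0 j k (x₁, y₂), h0 j k (y₁, y₂)]
    · rw [if_pos hj, if_neg hk, if_neg (not_lt.2 hj), if_pos (not_le.1 hk)]
      simp only [mul_zero, zero_mul, add_zero, zero_add, mul_comm]
      have b1 := hB2 j k x₁ x₂ y₂
      have b2 := hB2 j k y₁ x₂ y₂
      rw [hconv1 j, hconv2 k] at b1 b2
      have rearr : G j k (x₁, x₂) - G j k (y₁, x₂) - G j k (x₁, y₂) + G j k (y₁, y₂) =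
          (G j k (x₁, x₂) - G j k (x₁, y₂)) - (G j k (y₁, x₂) - G j k (y₁, y₂)) := by ring
      rw [rearr]
      have h2 := norm_sub_le (G j k (x₁, x₂) - G j k (x₁, y₂)) (G j k (y₁, x₂) - G j k (y₁, y₂))
      nlinarith [h2, b1, b2]
    · rw [if_neg hj, if_pos hk, if_pos (not_le.1 hj), if_neg (not_lt.2 hk)]
      simp only [mul_zero, zero_mul, add_zero, zero_add]
      have b1 := hB1 j k x₁ y₁ x₂
      have b2 := hB1 j k x₁ y₁ y₂
      rw [hconv1 k, hconv2 j] at b1 b2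
      have rearr : G j k (x₁, x₂) - G j k (y₁, x₂) - G j k (x₁, y₂) + G j k (y₁, y₂) =
          (G j k (x₁, x₂) - G j k (y₁, x₂)) - (G j k (x₁, y₂) - G j k (y₁, y₂)) := by ring
      rw [rearr]
      have h2 := norm_sub_le (G j k (x₁, x₂) - G j k (y₁, x₂)) (G j k (x₁, y₂) - G j k (y₁, y₂))
      nlinarith [h2, b1, b2]
    · rw [if_neg hj, if_neg hk, if_pos (not_le.1 hj), if_pos (not_le.1 hk)]
      simp only [mul_zero, zero_mul, add_zero, zero_add]
      have b1 := hBB j k x₁ y₁ x₂ y₂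
      have key : A * (2:ℝ) ^ (((j:ℝ) + (k:ℝ)) * (β - s)) = A * (rb ^ j * rb ^ k) := by
        rw [show ((j:ℝ)+(k:ℝ))*(β-s) = (j:ℝ)*(β-s) + ((k:ℝ)*(β-s)) by ring,
          Real.rpow_add two_pos, hconv2 j, hconv2 k]
      rw [key] at b1
      nlinarith [b1]
  -- summability of the bound
  have hT1 : Summable (fun p : ℤ × ℤ =>
      (if j₀ ≤ p.1 then ts ^ p.1 else 0) * (if k₀ ≤ p.2 then ts ^ p.2 else 0)) := by
    apply Summable.mul_of_nonneg Saj_sum Sak_sum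
    · intro j; exact haj0 j
    · intro k; exact hak0 k
  have hT2 : Summable (fun p : ℤ × ℤ =>
      (if j₀ ≤ p.1 then ts ^ p.1 else 0) * (if p.2 < k₀ then rb ^ p.2 else 0)) := by
    apply Summable.mul_of_nonneg Saj_sum Sck_sum
    · intro j; exact haj0 j
    · intro k; exact hck0 k
  have hT3 : Summable (fun p : ℤ × ℤ =>
      (if p.1 < j₀ then rb ^ p.1 else 0) * (if k₀ ≤ p.2 then ts ^ p.2 else 0)) := by
    apply Summable.mul_of_nonneg Scj_sum Sak_sum
    · intro j; exact hcj0 j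
    · intro k; exact hak0 k
  have hT4 : Summable (fun p : ℤ × ℤ =>
      (if p.1 < j₀ then rb ^ p.1 else 0) * (if p.2 < k₀ then rb ^ p.2 else 0)) := by
    apply Summable.mul_of_nonneg Scj_sum Sck_sum
    · intro j; exact hcj0 j
    · intro k; exact hck0 k
  have hT1c := hT1.mul_left (4*A)
  have hT2c := hT2.mul_left (2*A*‖x₂ - y₂‖ ^ β)
  have hT3c := hT3.mul_left (2*A*‖x₁ - y₁‖ ^ β)
  have hT4c := hT4.mul_left (A*(‖x₁ - y₁‖ ^ β * ‖x₂ - y₂‖ ^ β))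
  have hBsum : Summable (fun p : ℤ × ℤ =>
      4*A*((if j₀ ≤ p.1 then ts ^ p.1 else 0) * (if k₀ ≤ p.2 then ts ^ p.2 else 0)) +
      2*A*‖x₂ - y₂‖ ^ β*((if j₀ ≤ p.1 then ts ^ p.1 else 0) * (if p.2 < k₀ then rb ^ p.2 else 0)) +
      2*A*‖x₁ - y₁‖ ^ β*((if p.1 < j₀ then rb ^ p.1 else 0) * (if k₀ ≤ p.2 then ts ^ p.2 else 0)) +
      A*(‖x₁ - y₁‖ ^ β * ‖x₂ - y₂‖ ^ β)*((if p.1 < j₀ then rb ^ p.1 else 0) * (if p.2 < k₀ then rb ^ p.2 else 0))) :=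
    ((hT1c.add hT2c).add hT3c).add hT4c
  have hDsum : Summable (fun p : ℤ × ℤ =>
      ‖G p.1 p.2 (x₁, x₂) - G p.1 p.2 (y₁, x₂) -
        G p.1 p.2 (x₁, y₂) + G p.1 p.2 (y₁, y₂)‖) :=
    Summable.of_nonneg_of_le (fun _ => norm_nonneg _) hDB hBsum
  -- scale facts
  have hu_s : ts ^ j₀ ≤ ‖x₁ - y₁‖ ^ s := by
    rw [← hconv1 j₀, show -(j₀:ℝ)*s = (-(j₀:ℝ))*s by ring,
      Real.rpow_mul (by norm_num : (0:ℝ) ≤ 2)]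
    exact Real.rpow_le_rpow (Real.rpow_pos_of_pos two_pos _).le hu1 hs.le
  have hv_s : ts ^ k₀ ≤ ‖x₂ - y₂‖ ^ s := by
    rw [← hconv1 k₀, show -(k₀:ℝ)*s = (-(k₀:ℝ))*s by ring,
      Real.rpow_mul (by norm_num : (0:ℝ) ≤ 2)]
    exact Real.rpow_le_rpow (Real.rpow_pos_of_pos two_pos _).le hv1 hs.le
  have hu_b : rb ^ j₀ * ‖x₁ - y₁‖ ^ β ≤ rb * ‖x₁ - y₁‖ ^ s := by
    have hsplit : ‖x₁ - y₁‖ ^ β = ‖x₁ - y₁‖ ^ s * ‖x₁ - y₁‖ ^ (β - s) := by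
      rw [show β = s + (β - s) by ring, Real.rpow_add hu0]; ring_nf
    have h1 : ‖x₁ - y₁‖ ^ (β - s) ≤ (2:ℝ) ^ ((-(j₀:ℝ)+1)*(β-s)) := by
      calc ‖x₁ - y₁‖ ^ (β - s) ≤ ((2:ℝ) ^ (-(j₀:ℝ)+1)) ^ (β - s) :=
            Real.rpow_le_rpow hu0.le hu2 hβs.le
        _ = (2:ℝ) ^ ((-(j₀:ℝ)+1)*(β-s)) := by
            rw [← Real.rpow_mul (by norm_num : (0:ℝ) ≤ 2)]
    have h2 : (2:ℝ) ^ ((-(j₀:ℝ)+1)*(β-s)) * rb ^ j₀ = rb := by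
      rw [← hconv2 j₀, ← Real.rpow_add two_pos, hrb_def]
      congr 1; ring
    calc rb ^ j₀ * ‖x₁ - y₁‖ ^ β
        = (rb ^ j₀ * ‖x₁ - y₁‖ ^ (β - s)) * ‖x₁ - y₁‖ ^ s := by rw [hsplit]; ring
      _ ≤ (rb ^ j₀ * (2:ℝ) ^ ((-(j₀:ℝ)+1)*(β-s))) * ‖x₁ - y₁‖ ^ s := by
          have := zpow_pos hrb0 j₀
          have := Real.rpow_nonneg hu0.le s
          gcongr
      _ = rb * ‖x₁ - y₁‖ ^ s := by rw [mul_comm (rb ^ j₀) _, h2]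
  have hv_b : rb ^ k₀ * ‖x₂ - y₂‖ ^ β ≤ rb * ‖x₂ - y₂‖ ^ s := by
    have hsplit : ‖x₂ - y₂‖ ^ β = ‖x₂ - y₂‖ ^ s * ‖x₂ - y₂‖ ^ (β - s) := by
      rw [show β = s + (β - s) by ring, Real.rpow_add hv0]; ring_nf
    have h1 : ‖x₂ - y₂‖ ^ (β - s) ≤ (2:ℝ) ^ ((-(k₀:ℝ)+1)*(β-s)) := by
      calc ‖x₂ - y₂‖ ^ (β - s) ≤ ((2:ℝ) ^ (-(k₀:ℝ)+1)) ^ (β - s) :=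
            Real.rpow_le_rpow hv0.le hv2 hβs.le
        _ = (2:ℝ) ^ ((-(k₀:ℝ)+1)*(β-s)) := by
            rw [← Real.rpow_mul (by norm_num : (0:ℝ) ≤ 2)]
    have h2 : (2:ℝ) ^ ((-(k₀:ℝ)+1)*(β-s)) * rb ^ k₀ = rb := by
      rw [← hconv2 k₀, ← Real.rpow_add two_pos, hrb_def]
      congr 1; ring
    calc rb ^ k₀ * ‖x₂ - y₂‖ ^ β
        = (rb ^ k₀ * ‖x₂ - y₂‖ ^ (β - s)) * ‖x₂ - y₂‖ ^ s := by rw [hsplit]; ring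
      _ ≤ (rb ^ k₀ * (2:ℝ) ^ ((-(k₀:ℝ)+1)*(β-s))) * ‖x₂ - y₂‖ ^ s := by
          have := zpow_pos hrb0 k₀
          have := Real.rpow_nonneg hv0.le s
          gcongr
      _ = rb * ‖x₂ - y₂‖ ^ s := by rw [mul_comm (rb ^ k₀) _, h2]
  -- nonnegativity of the sums
  have hSaj0 : 0 ≤ ∑' j : ℤ, (if j₀ ≤ j then ts ^ j else 0) := tsum_nonneg haj0
  have hSak0 : 0 ≤ ∑' k : ℤ, (if k₀ ≤ k then ts ^ k else 0) := tsum_nonneg hak0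
  have hScj0 : 0 ≤ ∑' j : ℤ, (if j < j₀ then rb ^ j else 0) := tsum_nonneg hcj0
  have hSck0 : 0 ≤ ∑' k : ℤ, (if k < k₀ then rb ^ k else 0) := tsum_nonneg hck0
  -- main computation
  calc ‖∑' p : ℤ × ℤ, (G p.1 p.2 (x₁, x₂) - G p.1 p.2 (y₁, x₂) -
          G p.1 p.2 (x₁, y₂) + G p.1 p.2 (y₁, y₂))‖
      ≤ ∑' p : ℤ × ℤ, ‖G p.1 p.2 (x₁, x₂) - G p.1 p.2 (y₁, x₂) -
          G p.1 p.2 (x₁, y₂) + G p.1 p.2 (y₁, y₂)‖ := norm_tsum_le_tsum_norm hDsum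
    _ ≤ ∑' p : ℤ × ℤ,
        (4*A*((if j₀ ≤ p.1 then ts ^ p.1 else 0) * (if k₀ ≤ p.2 then ts ^ p.2 else 0)) +
        2*A*‖x₂ - y₂‖ ^ β*((if j₀ ≤ p.1 then ts ^ p.1 else 0) * (if p.2 < k₀ then rb ^ p.2 else 0)) +
        2*A*‖x₁ - y₁‖ ^ β*((if p.1 < j₀ then rb ^ p.1 else 0) * (if k₀ ≤ p.2 then ts ^ p.2 else 0)) +
        A*(‖x₁ - y₁‖ ^ β * ‖x₂ - y₂‖ ^ β)*((if p.1 < j₀ then rb ^ p.1 else 0) * (if p.2 < k₀ then rb ^ p.2 else 0))) :=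
        Summable.tsum_le_tsum hDB hDsum hBsum
    _ = 4*A*((∑' j : ℤ, (if j₀ ≤ j then ts ^ j else 0)) * (∑' k : ℤ, (if k₀ ≤ k then ts ^ k else 0))) +
        2*A*‖x₂ - y₂‖ ^ β*((∑' j : ℤ, (if j₀ ≤ j then ts ^ j else 0)) * (∑' k : ℤ, (if k < k₀ then rb ^ k else 0))) +
        2*A*‖x₁ - y₁‖ ^ β*((∑' j : ℤ, (if j < j₀ then rb ^ j else 0)) * (∑' k : ℤ, (if k₀ ≤ k then ts ^ k else 0))) +
        A*(‖x₁ - y₁‖ ^ β * ‖x₂ - y₂‖ ^ β)*((∑' j : ℤ, (if j < j₀ then rb ^ j else 0)) * (∑' k : ℤ, (if k < k₀ then rb ^ k else 0))) := by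
        rw [Summable.tsum_add ((hT1c.add hT2c).add hT3c) hT4c, Summable.tsum_add (hT1c.add hT2c) hT3c,
          Summable.tsum_add hT1c hT2c, tsum_mul_left, tsum_mul_left, tsum_mul_left, tsum_mul_left,
          tsum_prod_mul Saj_sum Sak_sum haj0 hak0,
          tsum_prod_mul Saj_sum Sck_sum haj0 hck0,
          tsum_prod_mul Scj_sum Sak_sum hcj0 hak0,
          tsum_prod_mul Scj_sum Sck_sum hcj0 hck0]
    _ ≤ (4*Ms*Ms + 2*Ms*Mb*rb + 2*Mb*Ms*rb + Mb*Mb*rb*rb) * A * ‖x₁ - y₁‖ ^ s * ‖x₂ - y₂‖ ^ s := by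
        have e1 : 4*A*((∑' j : ℤ, (if j₀ ≤ j then ts ^ j else 0)) * (∑' k : ℤ, (if k₀ ≤ k then ts ^ k else 0))) ≤
            4*Ms*Ms*(A * ‖x₁ - y₁‖ ^ s * ‖x₂ - y₂‖ ^ s) := by
          calc 4*A*((∑' j : ℤ, (if j₀ ≤ j then ts ^ j else 0)) * (∑' k : ℤ, (if k₀ ≤ k then ts ^ k else 0)))
              ≤ 4*A*((ts ^ j₀ * Ms) * (ts ^ k₀ * Ms)) := by gcongr 4*A*(?_*?_) <;> assumption
            _ = 4*Ms*Ms*(A * ts ^ j₀ * ts ^ k₀) := by ring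
            _ ≤ 4*Ms*Ms*(A * ‖x₁ - y₁‖ ^ s * ‖x₂ - y₂‖ ^ s) := by
                have := (zpow_pos hts0 j₀).le
                have := (zpow_pos hts0 k₀).le
                gcongr
        have e2 : 2*A*‖x₂ - y₂‖ ^ β*((∑' j : ℤ, (if j₀ ≤ j then ts ^ j else 0)) * (∑' k : ℤ, (if k < k₀ then rb ^ k else 0))) ≤
            2*Ms*Mb*rb*(A * ‖x₁ - y₁‖ ^ s * ‖x₂ - y₂‖ ^ s) := by
          calc 2*A*‖x₂ - y₂‖ ^ β*((∑' j : ℤ, (if j₀ ≤ j then ts ^ j else 0)) * (∑' k : ℤ, (if k < k₀ then rb ^ k else 0)))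
              ≤ 2*A*‖x₂ - y₂‖ ^ β*((ts ^ j₀ * Ms) * (rb ^ k₀ * Mb)) := by
                gcongr 2*A*‖x₂ - y₂‖ ^ β*(?_*?_) <;> assumption
            _ = 2*Ms*Mb*(A * ts ^ j₀ * (rb ^ k₀ * ‖x₂ - y₂‖ ^ β)) := by ring
            _ ≤ 2*Ms*Mb*(A * ‖x₁ - y₁‖ ^ s * (rb * ‖x₂ - y₂‖ ^ s)) := by
                have h1 := (zpow_pos hts0 j₀).le
                have h2 : (0:ℝ) ≤ rb ^ k₀ * ‖x₂ - y₂‖ ^ β :=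
                  mul_nonneg (zpow_pos hrb0 k₀).le hvβ
                gcongr
            _ = 2*Ms*Mb*rb*(A * ‖x₁ - y₁‖ ^ s * ‖x₂ - y₂‖ ^ s) := by ring
        have e3 : 2*A*‖x₁ - y₁‖ ^ β*((∑' j : ℤ, (if j < j₀ then rb ^ j else 0)) * (∑' k : ℤ, (if k₀ ≤ k then ts ^ k else 0))) ≤
            2*Mb*Ms*rb*(A * ‖x₁ - y₁‖ ^ s * ‖x₂ - y₂‖ ^ s) := by
          calc 2*A*‖x₁ - y₁‖ ^ β*((∑' j : ℤ, (if j < j₀ then rb ^ j else 0)) * (∑' k : ℤ, (if k₀ ≤ k then ts ^ k else 0)))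
              ≤ 2*A*‖x₁ - y₁‖ ^ β*((rb ^ j₀ * Mb) * (ts ^ k₀ * Ms)) := by
                gcongr 2*A*‖x₁ - y₁‖ ^ β*(?_*?_) <;> assumption
            _ = 2*Mb*Ms*(A * (rb ^ j₀ * ‖x₁ - y₁‖ ^ β) * ts ^ k₀) := by ring
            _ ≤ 2*Mb*Ms*(A * (rb * ‖x₁ - y₁‖ ^ s) * ‖x₂ - y₂‖ ^ s) := by
                have h1 := (zpow_pos hts0 k₀).le
                have h2 : (0:ℝ) ≤ rb ^ j₀ * ‖x₁ - y₁‖ ^ β :=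
                  mul_nonneg (zpow_pos hrb0 j₀).le huβ
                gcongr
            _ = 2*Mb*Ms*rb*(A * ‖x₁ - y₁‖ ^ s * ‖x₂ - y₂‖ ^ s) := by ring
        have e4 : A*(‖x₁ - y₁‖ ^ β * ‖x₂ - y₂‖ ^ β)*((∑' j : ℤ, (if j < j₀ then rb ^ j else 0)) * (∑' k : ℤ, (if k < k₀ then rb ^ k else 0))) ≤
            Mb*Mb*rb*rb*(A * ‖x₁ - y₁‖ ^ s * ‖x₂ - y₂‖ ^ s) := by
          calc A*(‖x₁ - y₁‖ ^ β * ‖x₂ - y₂‖ ^ β)*((∑' j : ℤ, (if j < j₀ then rb ^ j else 0)) * (∑' k : ℤ, (if k < k₀ then rb ^ k else 0)))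
              ≤ A*(‖x₁ - y₁‖ ^ β * ‖x₂ - y₂‖ ^ β)*((rb ^ j₀ * Mb) * (rb ^ k₀ * Mb)) := by
                gcongr A*(‖x₁ - y₁‖ ^ β * ‖x₂ - y₂‖ ^ β)*(?_*?_) <;> assumption
            _ = Mb*Mb*(A * (rb ^ j₀ * ‖x₁ - y₁‖ ^ β) * (rb ^ k₀ * ‖x₂ - y₂‖ ^ β)) := by ring
            _ ≤ Mb*Mb*(A * (rb * ‖x₁ - y₁‖ ^ s) * (rb * ‖x₂ - y₂‖ ^ s)) := by
                have h2 : (0:ℝ) ≤ rb ^ j₀ * ‖x₁ - y₁‖ ^ β :=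
                  mul_nonneg (zpow_pos hrb0 j₀).le huβ
                have h3 : (0:ℝ) ≤ rb ^ k₀ * ‖x₂ - y₂‖ ^ β :=
                  mul_nonneg (zpow_pos hrb0 k₀).le hvβ
                gcongr
            _ = Mb*Mb*rb*rb*(A * ‖x₁ - y₁‖ ^ s * ‖x₂ - y₂‖ ^ s) := by ring
        nlinarith [e1, e2, e3, e4]
end

section
/- Let b₁ be a para-accretive function on ℝⁿ, {S_j} an approximation to the identity associated to b₁ with regularity ε, D_j = S_j − S_{j−1}, and N ∈ ℕ. Let H^N_j(x,y) = ∫ D_j(x,z) b₁(z) S_{j−N−1}(z,y) b₁(y) dz be the kernel of D_j M_{b₁} S_{j−N−1} M_{b₁}. Then |H^N_j(x,y)| ≤ C 2^{−Nε} 2^{(j−N)n} for all x, y, and H^N_j(x,y) = 0 whenever |x−y| ≥ C 2^{−(j−N)}. -/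
open MeasureTheory Metric

def IsApproxId (n : ℕ) (Ca ε : ℝ) (b : E n → ℂ) (S : ℤ → E n → E n → ℂ) : Prop :=
  (∀ j : ℤ, Measurable (Function.uncurry (S j))) ∧
  (∀ (j : ℤ) (x y : E n), ‖S j x y‖ ≤ Ca * (2:ℝ) ^ ((j:ℝ) * n)) ∧
  (∀ (j : ℤ) (x y : E n), Ca * (2:ℝ) ^ (-(j:ℝ)) ≤ ‖x - y‖ → S j x y = 0) ∧
  (∀ (j : ℤ) (x x' y : E n),
      ‖S j x y - S j x' y‖ ≤ Ca * (2:ℝ) ^ ((j:ℝ) * ((n:ℝ) + ε)) * ‖x - x'‖ ^ ε) ∧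
  (∀ (j : ℤ) (x y y' : E n),
      ‖S j x y - S j x y'‖ ≤ Ca * (2:ℝ) ^ ((j:ℝ) * ((n:ℝ) + ε)) * ‖y - y'‖ ^ ε) ∧
  (∀ (j : ℤ) (x x' y y' : E n), ‖S j x y - S j x y' - (S j x' y - S j x' y')‖ ≤
      Ca * (2:ℝ) ^ ((j:ℝ) * ((n:ℝ) + 2*ε)) * ‖x - x'‖ ^ ε * ‖y - y'‖ ^ ε) ∧
  (∀ (j : ℤ) (x : E n), (∫ y, S j x y * b y) = 1) ∧
  (∀ (j : ℤ) (y : E n), (∫ x, S j x y * b x) = 1)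

lemma aux_int {n : ℕ} {f : E n → ℂ} (hf : Measurable f) {M R : ℝ} (hR : 0 ≤ R)
    (x₀ : E n) (hb : ∀ z, ‖f z‖ ≤ M) (hs : ∀ z, z ∉ closedBall x₀ R → f z = 0) :
    Integrable f ∧
      ‖∫ z, f z‖ ≤ M * (R ^ n * (volume (closedBall (0:E n) 1)).toReal) := by
  have hfin : volume (closedBall x₀ R) < ⊤ := measure_closedBall_lt_top
  have hIO : IntegrableOn f (closedBall x₀ R) :=
    Measure.integrableOn_of_bounded hfin.ne hf.aestronglyMeasurable
      (Filter.Eventually.of_forall hb)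
  have heq : f = (closedBall x₀ R).indicator f := by
    funext z
    by_cases h : z ∈ closedBall x₀ R
    · simp [h]
    · simp [h, hs z h]
  constructor
  · rw [heq]; exact hIO.integrable_indicator measurableSet_closedBall
  · rw [← setIntegral_eq_integral_of_forall_compl_eq_zero hs]
    have h1 : ‖∫ z in closedBall x₀ R, f z‖ ≤ M * (volume (closedBall x₀ R)).toReal :=
      norm_setIntegral_le_of_norm_le_const_ae hfin (Filter.Eventually.of_forall hb)
    have h2 : (volume (closedBall x₀ R)).toReal
        = R ^ n * (volume (closedBall (0:E n) 1)).toReal := by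
      rw [Measure.addHaar_closedBall' volume x₀ hR, ENNReal.toReal_mul,
        ENNReal.toReal_ofReal (by positivity), finrank_euclideanSpace_fin]
    rw [h2] at h1
    linarith [h1]

/-- Size and support of the kernel `H^N_j(x,y) = ∫ D_j(x,z) b₁(z) S_{j-N-1}(z,y) b₁(y) dz`
of `D_j M_{b₁} S_{j-N-1} M_{b₁}`:
`|H^N_j(x,y)| ≤ C 2^{-Nε} 2^{(j-N)n}` and `H^N_j(x,y) = 0` for `|x-y| ≥ C 2^{-(j-N)}`. -/
theorem tb_product_HNj_size_and_support
    (n : ℕ) (ε : ℝ) (hε : 0 < ε) (hε1 : ε ≤ 1)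
    (b₁ : E n → ℂ) (B : ℝ) (hb₁m : Measurable b₁) (hb₁ : ∀ x, ‖b₁ x‖ ≤ B)
    (Ca : ℝ) (hCa : 0 < Ca)
    (S : ℤ → E n → E n → ℂ) (hS : IsApproxId n Ca ε b₁ S) :
    ∃ C : ℝ, 0 < C ∧ ∀ (N : ℕ) (j : ℤ) (x y : E n),
      ‖∫ z, (S j x z - S (j-1) x z) * b₁ z * (S (j - N - 1) z y * b₁ y)‖ ≤
        C * (2:ℝ) ^ (-(N:ℝ) * ε) * (2:ℝ) ^ (((j:ℝ) - (N:ℝ)) * n) ∧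
      (C * (2:ℝ) ^ (-((j:ℝ) - (N:ℝ))) ≤ ‖x - y‖ →
        (∫ z, (S j x z - S (j-1) x z) * b₁ z * (S (j - N - 1) z y * b₁ y)) = 0) := by
  obtain ⟨hm, hsz, hsp, hHx, hHy, -, hI1, hI2⟩ := hS
  have hB : 0 ≤ B := le_trans (norm_nonneg _) (hb₁ 0)
  have h2p : (0:ℝ) < 2 := by norm_num
  set c : ℝ := (volume (closedBall (0:E n) 1)).toReal with hc
  have hc0 : 0 ≤ c := ENNReal.toReal_nonneg
  set K : ℝ := 2 * Ca ^ 2 * B ^ 2 * Ca ^ ε * Ca ^ n * c with hKdef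
  have hK0 : 0 ≤ K := by positivity
  refine ⟨K + 4 * Ca + 1, by positivity, ?_⟩
  intro N j x y
  -- measurability helpers
  have mS1 : ∀ (i : ℤ) (x : E n), Measurable fun z => S i x z := fun i x =>
    (hm i).comp (measurable_prodMk_left)
  have mS2 : ∀ (i : ℤ) (y : E n), Measurable fun z => S i z y := fun i y =>
    (hm i).comp (measurable_prodMk_right)
  set k : ℤ := j - N - 1 with hkdef
  have hkr : ((k:ℤ) : ℝ) = (j:ℝ) - (N:ℝ) - 1 := by rw [hkdef]; push_cast; ring
  have hj1r : (((j-1):ℤ) : ℝ) = (j:ℝ) - 1 := by push_cast; ring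
  set R : ℝ := Ca * (2:ℝ) ^ (1 - (j:ℝ)) with hRdef
  have hR0 : 0 ≤ R := by positivity
  -- support of D_j
  have hDsupp : ∀ z : E n, z ∉ closedBall x R → S j x z - S (j-1) x z = 0 := by
    intro z hz
    have hd : R < dist z x := by simpa [closedBall] using hz
    have hxz : R ≤ ‖x - z‖ := by
      rw [norm_sub_rev, ← dist_eq_norm]; exact hd.le
    have h1 : Ca * (2:ℝ) ^ (-(j:ℝ)) ≤ ‖x - z‖ := by
      refine le_trans ?_ hxz
      rw [hRdef]
      have : (2:ℝ) ^ (-(j:ℝ)) ≤ (2:ℝ) ^ (1 - (j:ℝ)) :=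
        Real.rpow_le_rpow_of_exponent_le one_le_two (by linarith)
      nlinarith
    have h2 : Ca * (2:ℝ) ^ (-(((j-1):ℤ):ℝ)) ≤ ‖x - z‖ := by
      rw [hj1r, show -((j:ℝ)-1) = 1 - (j:ℝ) by ring]
      exact hxz
    rw [hsp j x z h1, hsp (j-1) x z h2, sub_zero]
  -- size bound for D_j
  have hDsz : ∀ z : E n, ‖S j x z - S (j-1) x z‖ ≤ 2 * Ca * (2:ℝ) ^ ((j:ℝ) * n) := by
    intro z
    have b1 := hsz j x z
    have b2 := hsz (j-1) x z
    have : (2:ℝ) ^ ((((j-1):ℤ):ℝ) * n) ≤ (2:ℝ) ^ ((j:ℝ) * n) := by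
      apply Real.rpow_le_rpow_of_exponent_le one_le_two
      rw [hj1r]
      have : (0:ℝ) ≤ n := Nat.cast_nonneg n
      nlinarith
    calc ‖S j x z - S (j-1) x z‖ ≤ ‖S j x z‖ + ‖S (j-1) x z‖ := norm_sub_le _ _
      _ ≤ 2 * Ca * (2:ℝ) ^ ((j:ℝ) * n) := by nlinarith
  -- cancellation : ∫ D_j(x,z) b₁(z) dz = 0
  have hint : ∀ i : ℤ, Integrable (fun z => S i x z * b₁ z) := by
    intro i
    refine (aux_int (f := fun z => S i x z * b₁ z) (M := Ca * (2:ℝ) ^ ((i:ℝ) * n) * B)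
      ((mS1 i x).mul hb₁m) (by positivity : (0:ℝ) ≤ Ca * (2:ℝ) ^ (-(i:ℝ))) x ?_ ?_).1
    · intro z
      rw [norm_mul]
      have := hsz i x z
      have := hb₁ z
      have : (0:ℝ) ≤ ‖S i x z‖ := norm_nonneg _
      nlinarith [hsz i x z, hb₁ z, norm_nonneg (S i x z), norm_nonneg (b₁ z),
        Real.rpow_nonneg (le_of_lt h2p) ((i:ℝ)*n), hCa.le]
    · intro z hz
      have hd : Ca * (2:ℝ) ^ (-(i:ℝ)) < dist z x := by simpa [closedBall] using hz
      have hxz : Ca * (2:ℝ) ^ (-(i:ℝ)) ≤ ‖x - z‖ := by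
        rw [norm_sub_rev, ← dist_eq_norm]; exact hd.le
      rw [hsp i x z hxz, zero_mul]
  have hcancel : (∫ z, (S j x z - S (j-1) x z) * b₁ z) = 0 := by
    have : (fun z => (S j x z - S (j-1) x z) * b₁ z)
        = fun z => S j x z * b₁ z - S (j-1) x z * b₁ z := by
      funext z; ring
    rw [this, integral_sub (hint j) (hint (j-1)), hI1 j x, hI1 (j-1) x, sub_self]
  -- the split
  set M1 : ℝ := 2 * Ca * (2:ℝ) ^ ((j:ℝ) * n) * B
      * (Ca * (2:ℝ) ^ (((j:ℝ) - (N:ℝ) - 1) * ((n:ℝ) + ε)) * R ^ ε) * B with hM1def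
  have hM10 : 0 ≤ M1 := by positivity
  have hg1 := aux_int (f := fun z => (S j x z - S (j-1) x z) * b₁ z
        * ((S k z y - S k x y) * b₁ y)) (M := M1)
    ((((mS1 j x).sub (mS1 (j-1) x)).mul hb₁m).mul
      (((mS2 k y).sub measurable_const).mul measurable_const)) hR0 x ?_ ?_
  rotate_left
  · -- pointwise bound
    intro z
    by_cases hz : z ∈ closedBall x R
    · have hzx : ‖z - x‖ ≤ R := by
        rw [← dist_eq_norm]; exact hz
      have hH : ‖S k z y - S k x y‖
          ≤ Ca * (2:ℝ) ^ (((j:ℝ) - (N:ℝ) - 1) * ((n:ℝ) + ε)) * R ^ ε := by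
        have h0 := hHx k z x y
        rw [hkr] at h0
        refine h0.trans ?_
        have : ‖z - x‖ ^ ε ≤ R ^ ε := Real.rpow_le_rpow (norm_nonneg _) hzx hε.le
        have hpos : (0:ℝ) ≤ Ca * (2:ℝ) ^ (((j:ℝ) - (N:ℝ) - 1) * ((n:ℝ) + ε)) := by positivity
        exact mul_le_mul_of_nonneg_left this hpos
      show ‖(S j x z - S (j-1) x z) * b₁ z * ((S k z y - S k x y) * b₁ y)‖ ≤ M1
      rw [norm_mul, norm_mul, norm_mul]
      have e1 : ‖S j x z - S (j-1) x z‖ * ‖b₁ z‖ ≤ (2 * Ca * (2:ℝ) ^ ((j:ℝ) * n)) * B :=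
        mul_le_mul (hDsz z) (hb₁ z) (norm_nonneg _) (by positivity)
      have e2 : ‖S k z y - S k x y‖ * ‖b₁ y‖
          ≤ (Ca * (2:ℝ) ^ (((j:ℝ) - (N:ℝ) - 1) * ((n:ℝ) + ε)) * R ^ ε) * B :=
        mul_le_mul hH (hb₁ y) (norm_nonneg _) (by positivity)
      calc ‖S j x z - S (j-1) x z‖ * ‖b₁ z‖ * (‖S k z y - S k x y‖ * ‖b₁ y‖)
          ≤ ((2 * Ca * (2:ℝ) ^ ((j:ℝ) * n)) * B)
            * ((Ca * (2:ℝ) ^ (((j:ℝ) - (N:ℝ) - 1) * ((n:ℝ) + ε)) * R ^ ε) * B) :=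
            mul_le_mul e1 e2 (by positivity) (by positivity)
        _ = M1 := by rw [hM1def]; ring
    · show ‖(S j x z - S (j-1) x z) * b₁ z * ((S k z y - S k x y) * b₁ y)‖ ≤ M1
      rw [hDsupp z hz]
      simpa using hM10
  · intro z hz
    show (S j x z - S (j-1) x z) * b₁ z * ((S k z y - S k x y) * b₁ y) = 0
    rw [hDsupp z hz]
    simp
  obtain ⟨ig1, hbd1⟩ := hg1
  -- integrability of g2 and value of its integral
  have ig2 : Integrable (fun z => (S j x z - S (j-1) x z) * b₁ z * (S k x y * b₁ y)) :=
    (((hint j).sub (hint (j-1))).congr (by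
        filter_upwards with z using by simp only [Pi.sub_apply]; ring)).mul_const _
  have hIg2 : (∫ z, (S j x z - S (j-1) x z) * b₁ z * (S k x y * b₁ y)) = 0 := by
    rw [integral_mul_const, hcancel, zero_mul]
  constructor
  · have hsplitint : (∫ z, (S j x z - S (j-1) x z) * b₁ z * (S k z y * b₁ y))
        = ∫ z, ((S j x z - S (j-1) x z) * b₁ z * ((S k z y - S k x y) * b₁ y)
            + (S j x z - S (j-1) x z) * b₁ z * (S k x y * b₁ y)) := by
      congr 1; funext z; ring
    rw [hsplitint, integral_add ig1 ig2, hIg2, add_zero]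
    refine le_trans hbd1 ?_
    have hRe : R ^ ε = Ca ^ ε * (2:ℝ) ^ ((1 - (j:ℝ)) * ε) := by
      rw [hRdef, Real.mul_rpow hCa.le (by positivity),
        ← Real.rpow_mul (by norm_num : (0:ℝ) ≤ 2)]
    have hRn : R ^ n = Ca ^ n * (2:ℝ) ^ ((1 - (j:ℝ)) * (n:ℝ)) := by
      rw [hRdef, mul_pow, ← Real.rpow_natCast ((2:ℝ) ^ (1 - (j:ℝ))) n,
        ← Real.rpow_mul (by norm_num : (0:ℝ) ≤ 2)]
    have hexp : (2:ℝ) ^ ((j:ℝ) * n) * ((2:ℝ) ^ (((j:ℝ) - (N:ℝ) - 1) * ((n:ℝ) + ε))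
          * ((2:ℝ) ^ ((1 - (j:ℝ)) * ε) * (2:ℝ) ^ ((1 - (j:ℝ)) * (n:ℝ))))
        = (2:ℝ) ^ (-(N:ℝ) * ε) * (2:ℝ) ^ (((j:ℝ) - (N:ℝ)) * n) := by
      rw [← Real.rpow_add h2p, ← Real.rpow_add h2p, ← Real.rpow_add h2p,
        ← Real.rpow_add h2p]
      congr 1; ring
    have heq : M1 * (R ^ n * c)
        = K * (2:ℝ) ^ (-(N:ℝ) * ε) * (2:ℝ) ^ (((j:ℝ) - (N:ℝ)) * n) := by
      rw [hM1def, hRe, hRn, hKdef]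
      linear_combination (2 * Ca ^ 2 * B ^ 2 * Ca ^ ε * Ca ^ n * c) * hexp
    rw [← hc, heq]
    have hpos : (0:ℝ) ≤ (2:ℝ) ^ (-(N:ℝ) * ε) * (2:ℝ) ^ (((j:ℝ) - (N:ℝ)) * n) := by positivity
    nlinarith [hpos, hK0, hCa]
  · intro hxy
    set t : ℝ := (2:ℝ) ^ ((N:ℝ) - (j:ℝ)) with htdef
    have ht : (0:ℝ) < t := by positivity
    have e0 : (2:ℝ) ^ (-((j:ℝ) - (N:ℝ))) = t := by rw [htdef]; congr 1; ring
    have hxy4 : 4 * Ca * t ≤ ‖x - y‖ := by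
      rw [e0] at hxy
      have h4 : (4:ℝ) * Ca ≤ K + 4 * Ca + 1 := by linarith
      exact le_trans (mul_le_mul_of_nonneg_right h4 ht.le) hxy
    have hzero : ∀ z : E n, (S j x z - S (j-1) x z) * b₁ z * (S k z y * b₁ y) = 0 := by
      intro z
      rcases le_or_gt (Ca * (2:ℝ) ^ (-((k:ℤ):ℝ))) ‖z - y‖ with h | h
      · rw [hsp k z y h]; ring
      · have e1 : Ca * (2:ℝ) ^ (-((k:ℤ):ℝ)) = 2 * Ca * t := by
          rw [hkr, show -((j:ℝ) - (N:ℝ) - 1) = ((N:ℝ) - (j:ℝ)) + 1 by ring,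
            Real.rpow_add h2p, Real.rpow_one, htdef]
          ring
        rw [e1] at h
        have htri : ‖x - y‖ ≤ ‖x - z‖ + ‖z - y‖ := norm_sub_le_norm_sub_add_norm_sub x z y
        have hxz : 2 * Ca * t ≤ ‖x - z‖ := by linarith
        have hmono : (2:ℝ) ^ (-(j:ℝ)) ≤ t := by
          rw [htdef]
          exact Real.rpow_le_rpow_of_exponent_le one_le_two (by
            have : (0:ℝ) ≤ N := Nat.cast_nonneg N
            linarith)
        have hm1 : Ca * (2:ℝ) ^ (-(j:ℝ)) ≤ Ca * t := mul_le_mul_of_nonneg_left hmono hCa.le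
        have hm2 : (0:ℝ) ≤ Ca * t := mul_nonneg hCa.le ht.le
        have hz1 : Ca * (2:ℝ) ^ (-(j:ℝ)) ≤ ‖x - z‖ := by linarith
        have hz2 : Ca * (2:ℝ) ^ (-(((j-1):ℤ):ℝ)) ≤ ‖x - z‖ := by
          rw [hj1r, show -((j:ℝ) - 1) = -(j:ℝ) + 1 by ring, Real.rpow_add h2p,
            Real.rpow_one]
          linarith
        rw [hsp j x z hz1, hsp (j-1) x z hz2]
        ring
    have : (∫ z, (S j x z - S (j-1) x z) * b₁ z * (S k z y * b₁ y))
        = ∫ (_ : E n), (0:ℂ) := by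
      congr 1; funext z; exact hzero z
    simpa using this
end

section
/- With H^N_j as above, for |x−x'| ≤ C 2^{−(j−N)} one has the Hölder estimate |H^N_j(x,y) − H^N_j(x',y)| ≤ C 2^{jε} |x−x'|^ε 2^{(j−N)n}. -/
open MeasureTheory
open Metric

private lemma norm_mul_mul_le {a b c d : ℂ} {A B' C' D' : ℝ}
    (ha : ‖a‖ ≤ A) (hb : ‖b‖ ≤ B') (hc : ‖c‖ ≤ C') (hd : ‖d‖ ≤ D') :
    ‖a * b * (c * d)‖ ≤ A * B' * (C' * D') := by
  rw [norm_mul, norm_mul, norm_mul]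
  exact mul_le_mul (mul_le_mul ha hb (norm_nonneg b) ((norm_nonneg a).trans ha))
    (mul_le_mul hc hd (norm_nonneg d) ((norm_nonneg c).trans hc))
    (by positivity) (mul_nonneg ((norm_nonneg a).trans ha) ((norm_nonneg b).trans hb))

/-- Hölder estimate (2.5) for `H^N_j(x,y) = ∫ D_j(x,z) b₁(z) S_{j-N-1}(z,y) b₁(y) dz`:
for `|x-x'| ≤ C 2^{-(j-N)}`,
`|H^N_j(x,y) - H^N_j(x',y)| ≤ C 2^{jε} |x-x'|^ε 2^{(j-N)n}`. -/
theorem tb_product_HNj_holder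
    (n : ℕ) (ε : ℝ) (hε : 0 < ε) (hε1 : ε ≤ 1)
    (b₁ : E n → ℂ) (B : ℝ) (hb₁m : Measurable b₁) (hb₁ : ∀ x, ‖b₁ x‖ ≤ B)
    (Ca : ℝ) (hCa : 0 < Ca)
    (S : ℤ → E n → E n → ℂ) (hS : IsApproxId n Ca ε b₁ S) :
    ∃ C : ℝ, 0 < C ∧ ∀ (N : ℕ) (j : ℤ) (x x' y : E n),
      ‖x - x'‖ ≤ C * (2:ℝ) ^ (-((j:ℝ) - (N:ℝ))) →
      ‖(∫ z, (S j x z - S (j-1) x z) * b₁ z * (S (j - N - 1) z y * b₁ y)) -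
        (∫ z, (S j x' z - S (j-1) x' z) * b₁ z * (S (j - N - 1) z y * b₁ y))‖ ≤
        C * (2:ℝ) ^ ((j:ℝ) * ε) * ‖x - x'‖ ^ ε * (2:ℝ) ^ (((j:ℝ) - (N:ℝ)) * n) := by
  obtain ⟨hm, hsize, hsupp, hholx, hholy, hdbl, hint1, hint2⟩ := hS
  have hB : 0 ≤ B := le_trans (norm_nonneg _) (hb₁ 0)
  set V : ℝ := (volume (ball (0:E n) 1)).toReal with hV
  have hV0 : 0 ≤ V := ENNReal.toReal_nonneg
  refine ⟨4 * Ca ^ 2 * Ca ^ n * B ^ 2 * V + 1, by positivity, ?_⟩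
  set C : ℝ := 4 * Ca ^ 2 * Ca ^ n * B ^ 2 * V + 1 with hC
  intro N j x x' y _
  set r : ℝ := Ca * (2:ℝ) ^ (1 - (j:ℝ)) with hr
  have hr0 : 0 < r := by positivity
  -- size bound for S (j - N - 1)
  have hsizeS : ∀ z : E n, ‖S (j - N - 1) z y‖ ≤ Ca * (2:ℝ) ^ (((j:ℝ) - (N:ℝ) - 1) * n) := by
    intro z
    have := hsize (j - N - 1) z y
    have hc : ((j - (N:ℤ) - 1 : ℤ) : ℝ) = (j:ℝ) - (N:ℝ) - 1 := by push_cast; ring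
    rwa [hc] at this
  -- support of the D_j factor
  have hsupp0 : ∀ (w z : E n), z ∉ closedBall w r →
      (S j w z - S (j-1) w z) = 0 := by
    intro w z hz
    rw [mem_closedBall, dist_comm, dist_eq_norm] at hz
    push_neg at hz
    have h1 : Ca * (2:ℝ) ^ (-(j:ℝ)) ≤ ‖w - z‖ := by
      refine le_trans ?_ hz.le
      have : (2:ℝ) ^ (-(j:ℝ)) ≤ (2:ℝ) ^ (1 - (j:ℝ)) :=
        Real.rpow_le_rpow_of_exponent_le one_le_two (by linarith)
      exact mul_le_mul_of_nonneg_left this hCa.le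
    have h2 : Ca * (2:ℝ) ^ (-((j - 1 : ℤ):ℝ)) ≤ ‖w - z‖ := by
      have hc : -((j - 1 : ℤ):ℝ) = 1 - (j:ℝ) := by push_cast; ring
      rw [hc]; exact hz.le
    rw [hsupp j w z h1, hsupp (j-1) w z h2, sub_zero]
  -- integrability
  have hInt : ∀ w : E n, Integrable
      (fun z => (S j w z - S (j-1) w z) * b₁ z * (S (j - N - 1) z y * b₁ y)) := by
    intro w
    set M0 : ℝ := (Ca * (2:ℝ) ^ ((j:ℝ) * n) + Ca * (2:ℝ) ^ (((j:ℝ)-1) * n)) * B *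
      (Ca * (2:ℝ) ^ (((j:ℝ) - (N:ℝ) - 1) * n) * B) with hM0
    have hmeas : Measurable (fun z =>
        (S j w z - S (j-1) w z) * b₁ z * (S (j - N - 1) z y * b₁ y)) :=
      (((hm j).of_uncurry_left.sub (hm (j-1)).of_uncurry_left).mul hb₁m).mul
        (((hm (j - N - 1)).of_uncurry_right).mul_const (b₁ y))
    refine Integrable.mono' (g := (closedBall w r).indicator (fun _ => M0))
      ((integrable_indicator_iff measurableSet_closedBall).2
        (integrableOn_const measure_closedBall_lt_top.ne))
      hmeas.aestronglyMeasurable (Filter.Eventually.of_forall fun z => ?_)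
    by_cases hz : z ∈ closedBall w r
    · rw [Set.indicator_of_mem hz, hM0]
      have hs1 : ‖S j w z - S (j-1) w z‖ ≤ Ca * (2:ℝ) ^ ((j:ℝ) * n) + Ca * (2:ℝ) ^ (((j:ℝ)-1) * n) := by
        refine (norm_sub_le _ _).trans ?_
        have h1 := hsize j w z
        have h2 := hsize (j-1) w z
        have hc : ((j - 1 : ℤ):ℝ) = (j:ℝ) - 1 := by push_cast; ring
        rw [hc] at h2
        linarith
      exact norm_mul_mul_le hs1 (hb₁ z) (hsizeS z) (hb₁ y)
    · rw [Set.indicator_of_notMem hz, hsupp0 w z hz]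
      simp
  -- pointwise Hölder bound on the difference
  set t : ℝ := ‖x - x'‖ ^ ε with ht
  have ht0 : 0 ≤ t := Real.rpow_nonneg (norm_nonneg _) ε
  set M : ℝ := 2 * Ca * (2:ℝ) ^ ((j:ℝ) * ((n:ℝ) + ε)) * t * B *
    (Ca * (2:ℝ) ^ (((j:ℝ) - (N:ℝ) - 1) * n) * B) with hM
  have hM0' : 0 ≤ M := by positivity
  have hptw : ∀ z : E n,
      ‖(S j x z - S (j-1) x z) * b₁ z * (S (j - N - 1) z y * b₁ y) -
       (S j x' z - S (j-1) x' z) * b₁ z * (S (j - N - 1) z y * b₁ y)‖ ≤ M := by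
    intro z
    have heq : (S j x z - S (j-1) x z) * b₁ z * (S (j - N - 1) z y * b₁ y) -
        (S j x' z - S (j-1) x' z) * b₁ z * (S (j - N - 1) z y * b₁ y) =
        ((S j x z - S j x' z) - (S (j-1) x z - S (j-1) x' z)) * b₁ z *
          (S (j - N - 1) z y * b₁ y) := by ring
    rw [heq, hM]
    have hD : ‖(S j x z - S j x' z) - (S (j-1) x z - S (j-1) x' z)‖ ≤
        2 * Ca * (2:ℝ) ^ ((j:ℝ) * ((n:ℝ) + ε)) * t := by
      refine (norm_sub_le _ _).trans ?_
      have h1 := hholx j x x' z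
      have h2 := hholx (j-1) x x' z
      have hc : ((j - 1 : ℤ):ℝ) = (j:ℝ) - 1 := by push_cast; ring
      rw [hc] at h2
      have h3 : (2:ℝ) ^ (((j:ℝ) - 1) * ((n:ℝ) + ε)) ≤ (2:ℝ) ^ ((j:ℝ) * ((n:ℝ) + ε)) := by
        refine Real.rpow_le_rpow_of_exponent_le one_le_two ?_
        have hn : (0:ℝ) ≤ (n:ℝ) := Nat.cast_nonneg n
        nlinarith
      have h4 : Ca * (2:ℝ) ^ (((j:ℝ)-1) * ((n:ℝ) + ε)) * ‖x - x'‖ ^ ε ≤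
          Ca * (2:ℝ) ^ ((j:ℝ) * ((n:ℝ) + ε)) * ‖x - x'‖ ^ ε :=
        mul_le_mul_of_nonneg_right (mul_le_mul_of_nonneg_left h3 hCa.le)
          (Real.rpow_nonneg (norm_nonneg _) ε)
      rw [ht]
      calc ‖S j x z - S j x' z‖ + ‖S (j-1) x z - S (j-1) x' z‖
          ≤ Ca * (2:ℝ) ^ ((j:ℝ) * ((n:ℝ) + ε)) * ‖x - x'‖ ^ ε
            + Ca * (2:ℝ) ^ ((j:ℝ) * ((n:ℝ) + ε)) * ‖x - x'‖ ^ ε :=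
            add_le_add h1 (h2.trans h4)
        _ = 2 * Ca * (2:ℝ) ^ ((j:ℝ) * ((n:ℝ) + ε)) * ‖x - x'‖ ^ ε := by ring
    exact norm_mul_mul_le hD (hb₁ z) (hsizeS z) (hb₁ y)
  -- reduce to a set integral over the union of two balls
  set U : Set (E n) := closedBall x r ∪ closedBall x' r with hU
  have hUm : MeasurableSet U := measurableSet_closedBall.union measurableSet_closedBall
  have hUfin : volume U < ⊤ :=
    (measure_union_le _ _).trans_lt
      (ENNReal.add_lt_top.2 ⟨measure_closedBall_lt_top, measure_closedBall_lt_top⟩)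
  have hzero : ∀ z ∉ U, (S j x z - S (j-1) x z) * b₁ z * (S (j - N - 1) z y * b₁ y) -
      (S j x' z - S (j-1) x' z) * b₁ z * (S (j - N - 1) z y * b₁ y) = 0 := by
    intro z hz
    rw [hU, Set.mem_union] at hz
    push_neg at hz
    rw [hsupp0 x z hz.1, hsupp0 x' z hz.2]
    ring
  have hdiff : (∫ z, (S j x z - S (j-1) x z) * b₁ z * (S (j - N - 1) z y * b₁ y)) -
      (∫ z, (S j x' z - S (j-1) x' z) * b₁ z * (S (j - N - 1) z y * b₁ y)) =
      ∫ z in U, ((S j x z - S (j-1) x z) * b₁ z * (S (j - N - 1) z y * b₁ y) -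
        (S j x' z - S (j-1) x' z) * b₁ z * (S (j - N - 1) z y * b₁ y)) := by
    rw [setIntegral_eq_integral_of_forall_compl_eq_zero hzero,
      integral_sub (hInt x) (hInt x')]
  -- measure of U
  have hball : ∀ w : E n, volume (closedBall w r) =
      ENNReal.ofReal (r ^ n) * volume (ball (0:E n) 1) := by
    intro w
    rw [Measure.addHaar_closedBall _ _ hr0.le, finrank_euclideanSpace_fin]
  have hmU : (volume U).toReal ≤ 2 * (r ^ n * V) := by
    have h2 : volume U ≤ ENNReal.ofReal (r ^ n) * volume (ball (0:E n) 1) +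
        ENNReal.ofReal (r ^ n) * volume (ball (0:E n) 1) := by
      refine (measure_union_le _ _).trans ?_
      rw [hball x, hball x']
    have hfin : ENNReal.ofReal (r ^ n) * volume (ball (0:E n) 1) +
        ENNReal.ofReal (r ^ n) * volume (ball (0:E n) 1) ≠ ⊤ :=
      ENNReal.add_ne_top.2 ⟨ENNReal.mul_ne_top ENNReal.ofReal_ne_top measure_ball_lt_top.ne,
        ENNReal.mul_ne_top ENNReal.ofReal_ne_top measure_ball_lt_top.ne⟩
    calc (volume U).toReal ≤ (ENNReal.ofReal (r ^ n) * volume (ball (0:E n) 1) +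
          ENNReal.ofReal (r ^ n) * volume (ball (0:E n) 1)).toReal :=
          ENNReal.toReal_mono hfin h2
      _ = 2 * (r ^ n * V) := by
          rw [ENNReal.toReal_add (ENNReal.mul_ne_top ENNReal.ofReal_ne_top measure_ball_lt_top.ne)
            (ENNReal.mul_ne_top ENNReal.ofReal_ne_top measure_ball_lt_top.ne),
            ENNReal.toReal_mul, ENNReal.toReal_ofReal (by positivity)]
          ring
  -- main estimate
  have hmain : ‖(∫ z, (S j x z - S (j-1) x z) * b₁ z * (S (j - N - 1) z y * b₁ y)) -
      (∫ z, (S j x' z - S (j-1) x' z) * b₁ z * (S (j - N - 1) z y * b₁ y))‖ ≤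
      M * (2 * (r ^ n * V)) := by
    rw [hdiff]
    calc ‖∫ z in U, ((S j x z - S (j-1) x z) * b₁ z * (S (j - N - 1) z y * b₁ y) -
          (S j x' z - S (j-1) x' z) * b₁ z * (S (j - N - 1) z y * b₁ y))‖
        ≤ M * (volume U).toReal :=
          norm_setIntegral_le_of_norm_le_const hUfin (fun z _ => hptw z)
      _ ≤ M * (2 * (r ^ n * V)) := by gcongr
  refine hmain.trans ?_
  -- final arithmetic
  have hrn : r ^ n = Ca ^ n * (2:ℝ) ^ ((1 - (j:ℝ)) * n) := by
    rw [hr, mul_pow, ← Real.rpow_natCast ((2:ℝ) ^ (1 - (j:ℝ))) n,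
      ← Real.rpow_mul (by norm_num : (0:ℝ) ≤ 2)]
  have hpow : (2:ℝ) ^ ((j:ℝ) * ((n:ℝ) + ε)) * ((2:ℝ) ^ (((j:ℝ) - (N:ℝ) - 1) * n) *
      (2:ℝ) ^ ((1 - (j:ℝ)) * n)) = (2:ℝ) ^ ((j:ℝ) * ε) * (2:ℝ) ^ (((j:ℝ) - (N:ℝ)) * n) := by
    rw [← Real.rpow_add two_pos, ← Real.rpow_add two_pos, ← Real.rpow_add two_pos]
    ring_nf
  have hKC : 4 * Ca ^ 2 * Ca ^ n * B ^ 2 * V ≤ C := by rw [hC]; linarith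
  have heq2 : M * (2 * (r ^ n * V)) = (4 * Ca ^ 2 * Ca ^ n * B ^ 2 * V) * t *
      ((2:ℝ) ^ ((j:ℝ) * ε) * (2:ℝ) ^ (((j:ℝ) - (N:ℝ)) * n)) := by
    rw [hM, hrn, ← hpow]; ring
  rw [heq2]
  have hpq : (0:ℝ) ≤ (2:ℝ) ^ ((j:ℝ) * ε) * (2:ℝ) ^ (((j:ℝ) - (N:ℝ)) * n) :=
    mul_nonneg (Real.rpow_pos_of_pos two_pos _).le (Real.rpow_pos_of_pos two_pos _).le
  calc (4 * Ca ^ 2 * Ca ^ n * B ^ 2 * V) * t *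
        ((2:ℝ) ^ ((j:ℝ) * ε) * (2:ℝ) ^ (((j:ℝ) - (N:ℝ)) * n))
      ≤ C * t * ((2:ℝ) ^ ((j:ℝ) * ε) * (2:ℝ) ^ (((j:ℝ) - (N:ℝ)) * n)) :=
        mul_le_mul_of_nonneg_right (mul_le_mul_of_nonneg_right hKC ht0) hpq
    _ = C * (2:ℝ) ^ ((j:ℝ) * ε) * t * (2:ℝ) ^ (((j:ℝ) - (N:ℝ)) * n) := by ring
end

section
/- Let P_{j'}(x₁,v₁) = Σ_{j≤j'} ∫ D_j(x₁,y₁) b₁(y₁) D^N_j(y₁,v₁) dy₁ where D^N_j = Σ_{|ℓ|≤N} D_{j+ℓ}. Then for |x₁−v₁| ≤ 2^{−j'}, |P_{j'}(x₁,v₁)| ≤ C 2^{j'n}/(1+2^{j'}|x₁−v₁|)^{n+ε}. -/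
open MeasureTheory

lemma aux_integrable {n : ℕ} (f : E n → ℂ) (x0 : E n) (Cb R : ℝ)
    (hm : Measurable f) (hC : ∀ y, ‖f y‖ ≤ Cb)
    (hsupp : ∀ y, R ≤ ‖x0 - y‖ → f y = 0) : Integrable f := by
  have h1 : IntegrableOn f (Metric.closedBall x0 R) volume :=
    Measure.integrableOn_of_bounded (measure_closedBall_lt_top).ne
      hm.aestronglyMeasurable (Filter.Eventually.of_forall hC)
  refine h1.integrable_of_forall_notMem_eq_zero fun y hy => hsupp y ?_
  have h2 : R < dist y x0 := lt_of_not_ge (fun h => hy (Metric.mem_closedBall.2 h))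
  rw [dist_eq_norm, norm_sub_rev] at h2
  exact h2.le

set_option maxHeartbeats 1000000 in
/-- Estimate (3.2), first half: the kernel
`P_{j'}(x,v) = Σ_{j ≤ j'} ∫ D_j(x,y) b₁(y) D^N_j(y,v) dy` satisfies
`|P_{j'}(x,v)| ≤ C 2^{j'n}/(1+2^{j'}|x-v|)^{n+ε}` whenever `|x-v| ≤ 2^{-j'}`. -/
theorem tb_product_Pj_poisson_bound
    (n : ℕ) (ε : ℝ) (hε : 0 < ε) (hε1 : ε ≤ 1)
    (b₁ : E n → ℂ) (B : ℝ) (hb₁m : Measurable b₁) (hb₁ : ∀ x, ‖b₁ x‖ ≤ B)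
    (Ca : ℝ) (hCa : 0 < Ca)
    (S : ℤ → E n → E n → ℂ) (hS : IsApproxId n Ca ε b₁ S) (N : ℕ) :
    ∃ C : ℝ, 0 < C ∧ ∀ (j' : ℤ) (x v : E n), ‖x - v‖ ≤ (2:ℝ) ^ (-(j':ℝ)) →
      ‖∑' j : ℤ, if j ≤ j' then
          (∫ y, (S j x y - S (j-1) x y) * b₁ y *
            (∑ l ∈ Finset.Icc (-(N:ℤ)) (N:ℤ),
              (S (j+l) y v - S (j+l-1) y v)))
        else 0‖ ≤
        C * (2:ℝ) ^ ((j':ℝ) * n) / (1 + (2:ℝ) ^ ((j':ℝ)) * ‖x - v‖) ^ ((n:ℝ) + ε) := by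
  obtain ⟨hSm, hSsize, hSsupp, hShol, -, -, hScanc, -⟩ := hS
  have hB : 0 ≤ B := le_trans (norm_nonneg _) (hb₁ 0)
  have hmono : ∀ a b : ℝ, a ≤ b → (2:ℝ)^a ≤ (2:ℝ)^b := fun a b h =>
    Real.rpow_le_rpow_of_exponent_le one_le_two h
  have hn0 : (0:ℝ) ≤ (n:ℝ) := Nat.cast_nonneg n
  -- measurability of sections
  have measS1 : ∀ (j : ℤ) (x : E n), Measurable fun y => S j x y := fun j x =>
    (hSm j).comp (measurable_const.prodMk measurable_id)
  have measS2 : ∀ (j : ℤ) (v : E n), Measurable fun y => S j y v := fun j v =>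
    (hSm j).comp (measurable_id.prodMk measurable_const)
  -- size of D_j
  have Dsize : ∀ (j : ℤ) (x y : E n), ‖S j x y - S (j-1) x y‖ ≤ 2*Ca*(2:ℝ)^((j:ℝ)*n) := by
    intro j x y
    have h1 := hSsize j x y
    have h2 := hSsize (j-1) x y
    push_cast at h2
    have h3 : (2:ℝ)^(((j:ℝ)-1)*(n:ℝ)) ≤ (2:ℝ)^((j:ℝ)*(n:ℝ)) := hmono _ _ (by nlinarith)
    calc ‖S j x y - S (j-1) x y‖ ≤ ‖S j x y‖ + ‖S (j-1) x y‖ := norm_sub_le _ _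
      _ ≤ 2*Ca*(2:ℝ)^((j:ℝ)*n) := by nlinarith
  -- support of D_j
  have Dsupp : ∀ (j : ℤ) (x y : E n), 2*Ca*(2:ℝ)^(-(j:ℝ)) ≤ ‖x - y‖ →
      S j x y - S (j-1) x y = 0 := by
    intro j x y h
    have hp : (0:ℝ) < (2:ℝ)^(-(j:ℝ)) := Real.rpow_pos_of_pos two_pos _
    have e1 : S j x y = 0 := hSsupp j x y (by nlinarith)
    have e2 : S (j-1) x y = 0 := by
      apply hSsupp (j-1) x y
      push_cast
      have : (2:ℝ)^(-((j:ℝ)-1)) = 2*(2:ℝ)^(-(j:ℝ)) := by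
        rw [show -((j:ℝ)-1) = 1 + -(j:ℝ) by ring, Real.rpow_add two_pos, Real.rpow_one]
      rw [this]; linarith
    rw [e1, e2, sub_zero]
  -- Hölder regularity of D_j in the first variable
  have Dhol : ∀ (j : ℤ) (a a' c : E n),
      ‖(S j a c - S (j-1) a c) - (S j a' c - S (j-1) a' c)‖ ≤
        2*Ca*(2:ℝ)^((j:ℝ)*((n:ℝ)+ε))*‖a - a'‖^ε := by
    intro j a a' c
    have h1 := hShol j a a' c
    have h2 := hShol (j-1) a a' c
    push_cast at h2
    have hle : (2:ℝ)^(((j:ℝ)-1)*((n:ℝ)+ε)) ≤ (2:ℝ)^((j:ℝ)*((n:ℝ)+ε)) :=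
      hmono _ _ (by nlinarith)
    have hpow : (0:ℝ) ≤ ‖a - a'‖^ε := Real.rpow_nonneg (norm_nonneg _) ε
    calc ‖(S j a c - S (j-1) a c) - (S j a' c - S (j-1) a' c)‖
        = ‖(S j a c - S j a' c) - (S (j-1) a c - S (j-1) a' c)‖ := by congr 1; ring
      _ ≤ ‖S j a c - S j a' c‖ + ‖S (j-1) a c - S (j-1) a' c‖ := norm_sub_le _ _
      _ ≤ 2*Ca*(2:ℝ)^((j:ℝ)*((n:ℝ)+ε))*‖a - a'‖^ε := by
          nlinarith [mul_le_mul_of_nonneg_right (mul_le_mul_of_nonneg_left hle hCa.le) hpow]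
  -- integrability of S_j(x,·) b
  have intSb : ∀ (j : ℤ) (x : E n), Integrable (fun y => S j x y * b₁ y) := by
    intro j x
    apply aux_integrable _ x (Ca * (2:ℝ)^((j:ℝ)*n) * B) (Ca * (2:ℝ)^(-(j:ℝ)))
    · exact (measS1 j x).mul hb₁m
    · intro y; rw [norm_mul]
      exact mul_le_mul (hSsize j x y) (hb₁ y) (norm_nonneg _) (by positivity)
    · intro y h; rw [hSsupp j x y h, zero_mul]
  -- cancellation
  have intDb0 : ∀ (j : ℤ) (x : E n), (∫ y, (S j x y - S (j-1) x y) * b₁ y) = 0 := by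
    intro j x
    have he : (fun y => (S j x y - S (j-1) x y) * b₁ y) =
        fun y => S j x y * b₁ y - S (j-1) x y * b₁ y := by funext y; ring
    rw [he, integral_sub (intSb j x) (intSb (j-1) x), hScanc j x, hScanc (j-1) x, sub_self]
  rcases Nat.eq_zero_or_pos n with hn | hn
  · -- dimension 0 : every term vanishes
    subst hn
    haveI hsub : Subsingleton (E 0) := ⟨fun a b => by ext i; exact i.elim0⟩
    refine ⟨1, one_pos, fun j' x v hxv => ?_⟩
    have hzero : ∀ j : ℤ, (if j ≤ j' then
          (∫ y, (S j x y - S (j-1) x y) * b₁ y *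
            (∑ l ∈ Finset.Icc (-(N:ℤ)) (N:ℤ), (S (j+l) y v - S (j+l-1) y v)))
        else 0) = (0:ℂ) := by
      intro j
      by_cases hj : j ≤ j'
      · rw [if_pos hj]
        have he : (fun y : E 0 => (S j x y - S (j-1) x y) * b₁ y *
              (∑ l ∈ Finset.Icc (-(N:ℤ)) (N:ℤ), (S (j+l) y v - S (j+l-1) y v))) =
            fun y => (S j x y - S (j-1) x y) * b₁ y *
              (∑ l ∈ Finset.Icc (-(N:ℤ)) (N:ℤ), (S (j+l) x v - S (j+l-1) x v)) := by
          funext y; rw [Subsingleton.elim y x]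
        rw [he, integral_mul_const, intDb0 j x, zero_mul]
      · rw [if_neg hj]
    rw [tsum_congr hzero, tsum_zero, norm_zero]
    positivity
  · -- n ≥ 1
    have hn1 : (1:ℝ) ≤ (n:ℝ) := by exact_mod_cast hn
    set M : ℝ := (2*(N:ℝ)+1)*(2*Ca*(2:ℝ)^((N:ℝ)*((n:ℝ)+ε))) with hMdef
    set V : ℝ := (volume (Metric.closedBall (0:E n) 1)).toReal with hVdef
    have hV0 : 0 ≤ V := ENNReal.toReal_nonneg
    have hM0 : 0 < M := by positivity
    set K : ℝ := 2*Ca*B*M*(2*Ca)^ε*(2*Ca)^(n:ℕ)*V with hKdef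
    have hK0 : 0 ≤ K := by positivity
    have hhalf : (2:ℝ)^(-(n:ℝ)) < 1 := by
      have h1 : -(n:ℝ) < 0 := by linarith
      simpa using Real.rpow_lt_one_of_one_lt_of_neg one_lt_two h1
    have hgeo0 : (0:ℝ) ≤ (2:ℝ)^(-(n:ℝ)) := le_of_lt (Real.rpow_pos_of_pos two_pos _)
    set c : ℝ := (1 - (2:ℝ)^(-(n:ℝ)))⁻¹ with hcdef
    have hc0 : 0 < c := inv_pos.2 (by linarith)
    refine ⟨(K*c+1)*(2:ℝ)^((n:ℝ)+1), by positivity, fun j' x v hxv => ?_⟩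
    -- per-term bound
    have hterm : ∀ j : ℤ, ‖∫ y, (S j x y - S (j-1) x y) * b₁ y *
          (∑ l ∈ Finset.Icc (-(N:ℤ)) (N:ℤ), (S (j+l) y v - S (j+l-1) y v))‖ ≤
        K * (2:ℝ)^((j:ℝ)*(n:ℝ)) := by
      intro j
      set r : ℝ := 2*Ca*(2:ℝ)^(-(j:ℝ)) with hrdef
      have hr0 : 0 < r := by positivity
      set G : E n → ℂ := fun y => ∑ l ∈ Finset.Icc (-(N:ℤ)) (N:ℤ),
        (S (j+l) y v - S (j+l-1) y v) with hGdef
      have hGm : Measurable G :=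
        Finset.measurable_sum _ (fun l _ => ((measS2 (j+l) v).sub (measS2 (j+l-1) v)))
      have hcardn : (Finset.Icc (-(N:ℤ)) (N:ℤ)).card = 2*N+1 := by
        rw [Int.card_Icc]; omega
      have hcard : ((Finset.Icc (-(N:ℤ)) (N:ℤ)).card : ℝ) = 2*(N:ℝ)+1 := by
        rw [hcardn]; push_cast; ring
      have hGb : ∀ y, ‖G y‖ ≤ (2*(N:ℝ)+1) * (2*Ca*(2:ℝ)^(((j:ℝ)+(N:ℝ))*(n:ℝ))) := by
        intro y
        refine (norm_sum_le _ _).trans ?_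
        have hb : ∀ l ∈ Finset.Icc (-(N:ℤ)) (N:ℤ),
            ‖S (j+l) y v - S (j+l-1) y v‖ ≤ 2*Ca*(2:ℝ)^(((j:ℝ)+(N:ℝ))*(n:ℝ)) := by
          intro l hl
          rw [Finset.mem_Icc] at hl
          refine (Dsize (j+l) y v).trans ?_
          have hlN : (l:ℝ) ≤ (N:ℝ) := by exact_mod_cast hl.2
          have hle : ((j+l : ℤ):ℝ) * n ≤ ((j:ℝ)+(N:ℝ))*(n:ℝ) := by push_cast; nlinarith
          nlinarith [hmono _ _ hle]
        calc ∑ l ∈ Finset.Icc (-(N:ℤ)) (N:ℤ), ‖S (j+l) y v - S (j+l-1) y v‖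
            ≤ (Finset.Icc (-(N:ℤ)) (N:ℤ)).card • (2*Ca*(2:ℝ)^(((j:ℝ)+(N:ℝ))*(n:ℝ))) :=
              Finset.sum_le_card_nsmul _ _ _ hb
          _ = (2*(N:ℝ)+1) * (2*Ca*(2:ℝ)^(((j:ℝ)+(N:ℝ))*(n:ℝ))) := by
              rw [nsmul_eq_mul, hcard]
      -- integrability
      have hDb : ∀ y, ‖(S j x y - S (j-1) x y) * b₁ y‖ ≤ 2*Ca*(2:ℝ)^((j:ℝ)*(n:ℝ)) * B := by
        intro y
        rw [norm_mul]
        exact mul_le_mul (Dsize j x y) (hb₁ y) (norm_nonneg _) (by positivity)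
      have hf1 : Integrable (fun y => (S j x y - S (j-1) x y) * b₁ y * G y) := by
        apply aux_integrable _ x
          (2*Ca*(2:ℝ)^((j:ℝ)*(n:ℝ)) * B * ((2*(N:ℝ)+1)*(2*Ca*(2:ℝ)^(((j:ℝ)+(N:ℝ))*(n:ℝ))))) r
        · exact (((measS1 j x).sub (measS1 (j-1) x)).mul hb₁m).mul hGm
        · intro y
          rw [norm_mul]
          exact mul_le_mul (hDb y) (hGb y) (norm_nonneg _) (by positivity)
        · intro y h
          rw [Dsupp j x y h, zero_mul, zero_mul]
      have hf2 : Integrable (fun y => (S j x y - S (j-1) x y) * b₁ y * G x) := by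
        apply aux_integrable _ x (2*Ca*(2:ℝ)^((j:ℝ)*(n:ℝ)) * B * ‖G x‖) r
        · exact (((measS1 j x).sub (measS1 (j-1) x)).mul hb₁m).mul measurable_const
        · intro y
          rw [norm_mul]
          exact mul_le_mul (hDb y) le_rfl (norm_nonneg _) (by positivity)
        · intro y h
          rw [Dsupp j x y h, zero_mul, zero_mul]
      have hzero2 : (∫ y, (S j x y - S (j-1) x y) * b₁ y * G x) = 0 := by
        rw [integral_mul_const, intDb0 j x, zero_mul]
      have key : (∫ y, (S j x y - S (j-1) x y) * b₁ y * G y) =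
          ∫ y, (S j x y - S (j-1) x y) * b₁ y * (G y - G x) := by
        rw [show (fun y => (S j x y - S (j-1) x y) * b₁ y * (G y - G x)) =
            fun y => (S j x y - S (j-1) x y) * b₁ y * G y -
              (S j x y - S (j-1) x y) * b₁ y * G x from funext fun y => by ring,
          integral_sub hf1 hf2, hzero2, sub_zero]
      set K₂ : ℝ := 2*Ca*(2:ℝ)^((j:ℝ)*(n:ℝ)) * B * (M*(2:ℝ)^((j:ℝ)*((n:ℝ)+ε))*r^ε)
        with hK₂def
      have hGdiff : ∀ y ∈ Metric.closedBall x r,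
          ‖G y - G x‖ ≤ M * (2:ℝ)^((j:ℝ)*((n:ℝ)+ε)) * r^ε := by
        intro y hy
        have hdist : ‖y - x‖ ≤ r := by
          rw [← dist_eq_norm]; exact Metric.mem_closedBall.1 hy
        have hyx : ‖y - x‖^ε ≤ r^ε := Real.rpow_le_rpow (norm_nonneg _) hdist hε.le
        have hsplit : G y - G x = ∑ l ∈ Finset.Icc (-(N:ℤ)) (N:ℤ),
            ((S (j+l) y v - S (j+l-1) y v) - (S (j+l) x v - S (j+l-1) x v)) := by
          rw [hGdef, Finset.sum_sub_distrib]
        rw [hsplit]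
        refine (norm_sum_le _ _).trans ?_
        have hb : ∀ l ∈ Finset.Icc (-(N:ℤ)) (N:ℤ),
            ‖(S (j+l) y v - S (j+l-1) y v) - (S (j+l) x v - S (j+l-1) x v)‖ ≤
              (2*Ca*(2:ℝ)^((N:ℝ)*((n:ℝ)+ε))) * (2:ℝ)^((j:ℝ)*((n:ℝ)+ε)) * r^ε := by
          intro l hl
          rw [Finset.mem_Icc] at hl
          refine (Dhol (j+l) y x v).trans ?_
          have hlN : (l:ℝ) ≤ (N:ℝ) := by exact_mod_cast hl.2
          have hle : ((j+l : ℤ):ℝ) * ((n:ℝ)+ε) ≤ ((j:ℝ)+(N:ℝ))*((n:ℝ)+ε) := by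
            push_cast; nlinarith
          have h2 := hmono _ _ hle
          have h3 : (2:ℝ)^(((j:ℝ)+(N:ℝ))*((n:ℝ)+ε)) =
              (2:ℝ)^((N:ℝ)*((n:ℝ)+ε)) * (2:ℝ)^((j:ℝ)*((n:ℝ)+ε)) := by
            rw [← Real.rpow_add two_pos]; congr 1; ring
          have hyx0 : (0:ℝ) ≤ ‖y - x‖^ε := Real.rpow_nonneg (norm_nonneg _) ε
          have hr0' : (0:ℝ) ≤ r^ε := Real.rpow_nonneg hr0.le ε
          rw [h3] at h2
          calc 2*Ca*(2:ℝ)^(((j+l:ℤ):ℝ)*((n:ℝ)+ε))*‖y - x‖^ε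
              ≤ 2*Ca*((2:ℝ)^((N:ℝ)*((n:ℝ)+ε)) * (2:ℝ)^((j:ℝ)*((n:ℝ)+ε)))*r^ε := by
                have hp1 : (0:ℝ) < (2:ℝ)^(((j+l:ℤ):ℝ)*((n:ℝ)+ε)) :=
                  Real.rpow_pos_of_pos two_pos _
                nlinarith [mul_le_mul h2 hyx (Real.rpow_nonneg (norm_nonneg _) ε)
                  (by positivity)]
            _ = (2*Ca*(2:ℝ)^((N:ℝ)*((n:ℝ)+ε))) * (2:ℝ)^((j:ℝ)*((n:ℝ)+ε)) * r^ε := by ring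
        calc ∑ l ∈ Finset.Icc (-(N:ℤ)) (N:ℤ),
              ‖(S (j+l) y v - S (j+l-1) y v) - (S (j+l) x v - S (j+l-1) x v)‖
            ≤ (Finset.Icc (-(N:ℤ)) (N:ℤ)).card •
              ((2*Ca*(2:ℝ)^((N:ℝ)*((n:ℝ)+ε))) * (2:ℝ)^((j:ℝ)*((n:ℝ)+ε)) * r^ε) :=
              Finset.sum_le_card_nsmul _ _ _ hb
          _ = M * (2:ℝ)^((j:ℝ)*((n:ℝ)+ε)) * r^ε := by
              rw [nsmul_eq_mul, hcard, hMdef]; ring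
      have hpt : ∀ y, ‖(S j x y - S (j-1) x y) * b₁ y * (G y - G x)‖ ≤
          (Metric.closedBall x r).indicator (fun _ => K₂) y := by
        intro y
        by_cases hy : y ∈ Metric.closedBall x r
        · rw [Set.indicator_of_mem hy, hK₂def, norm_mul]
          exact mul_le_mul (hDb y) (hGdiff y hy) (norm_nonneg _) (by positivity)
        · rw [Set.indicator_of_notMem hy]
          have hout : r ≤ ‖x - y‖ := by
            have h2 : r < dist y x := lt_of_not_ge (fun h => hy (Metric.mem_closedBall.2 h))
            rw [dist_eq_norm, norm_sub_rev] at h2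
            exact h2.le
          rw [Dsupp j x y hout, zero_mul, zero_mul, norm_zero]
      have hind_int : Integrable ((Metric.closedBall x r).indicator fun _ => K₂)
          (volume : Measure (E n)) := by
        refine IntegrableOn.integrable_indicator ?_ measurableSet_closedBall
        exact integrableOn_const measure_closedBall_lt_top.ne
      have hIub := norm_integral_le_of_norm_le hind_int (Filter.Eventually.of_forall hpt)
      have hind : (∫ y, (Metric.closedBall x r).indicator (fun _ => K₂) y) =
          K₂ * (r^(n:ℕ) * V) := by
        rw [integral_indicator_const _ measurableSet_closedBall, smul_eq_mul, measureReal_def,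
          Measure.addHaar_closedBall' volume x hr0.le, finrank_euclideanSpace_fin,
          ENNReal.toReal_mul, ENNReal.toReal_ofReal (by positivity), ← hVdef]
        ring
      have efin : K₂ * (r^(n:ℕ) * V) = K * (2:ℝ)^((j:ℝ)*(n:ℝ)) := by
        have e1 : r ^ ε = (2*Ca)^ε * (2:ℝ)^(-(j:ℝ)*ε) := by
          rw [hrdef, Real.mul_rpow (by positivity) (by positivity),
            ← Real.rpow_mul (by norm_num : (0:ℝ) ≤ 2)]
        have e2 : r ^ (n:ℕ) = (2*Ca)^(n:ℕ) * (2:ℝ)^(-(j:ℝ)*(n:ℝ)) := by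
          rw [hrdef, mul_pow]
          congr 1
          rw [← Real.rpow_natCast ((2:ℝ)^(-(j:ℝ))) n,
            ← Real.rpow_mul (by norm_num : (0:ℝ) ≤ 2)]
        have epow : (2:ℝ)^((j:ℝ)*(n:ℝ)) * (2:ℝ)^((j:ℝ)*((n:ℝ)+ε)) * (2:ℝ)^(-(j:ℝ)*ε) *
            (2:ℝ)^(-(j:ℝ)*(n:ℝ)) = (2:ℝ)^((j:ℝ)*(n:ℝ)) := by
          rw [← Real.rpow_add two_pos, ← Real.rpow_add two_pos, ← Real.rpow_add two_pos]
          congr 1; ring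
        rw [hK₂def, hKdef, e1, e2]
        linear_combination (2*Ca*B*M*(2*Ca)^ε*(2*Ca)^(n:ℕ)*V) * epow
      calc ‖∫ y, (S j x y - S (j-1) x y) * b₁ y * G y‖
          = ‖∫ y, (S j x y - S (j-1) x y) * b₁ y * (G y - G x)‖ := by rw [key]
        _ ≤ ∫ y, (Metric.closedBall x r).indicator (fun _ => K₂) y := hIub
        _ = K₂ * (r^(n:ℕ) * V) := hind
        _ = K * (2:ℝ)^((j:ℝ)*(n:ℝ)) := efin
    -- summation over j ≤ j'
    have hi : Function.Injective (fun k : ℕ => j' - (k:ℤ)) := by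
      intro a b h
      simp only at h
      omega
    have hrange : ∀ jj : ℤ, jj ∉ Set.range (fun k : ℕ => j' - (k:ℤ)) →
        (if jj ≤ j' then K * (2:ℝ)^((jj:ℝ)*(n:ℝ)) else 0) = 0 := by
      intro jj h
      rw [if_neg]
      intro hle
      exact h ⟨(j' - jj).toNat, by simp only; omega⟩
    have hcomp : ∀ k : ℕ, (if (j' - (k:ℤ)) ≤ j' then
          K * (2:ℝ)^(((j' - (k:ℤ) : ℤ):ℝ)*(n:ℝ)) else 0)
        = (K * (2:ℝ)^((j':ℝ)*(n:ℝ))) * ((2:ℝ)^(-(n:ℝ)))^k := by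
      intro k
      rw [if_pos (by omega)]
      have hc1 : ((j' - (k:ℤ) : ℤ):ℝ) = (j':ℝ) - (k:ℝ) := by push_cast; ring
      have hc2 : (2:ℝ)^(((j':ℝ) - (k:ℝ))*(n:ℝ)) =
          (2:ℝ)^((j':ℝ)*(n:ℝ)) * ((2:ℝ)^(-(n:ℝ)))^k := by
        rw [← Real.rpow_natCast ((2:ℝ)^(-(n:ℝ))) k,
          ← Real.rpow_mul (by norm_num : (0:ℝ) ≤ 2), ← Real.rpow_add two_pos]
        congr 1; ring
      rw [hc1, hc2]
      exact (mul_assoc K _ _).symm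
    have hgsumN : Summable (fun k : ℕ => (K * (2:ℝ)^((j':ℝ)*(n:ℝ))) * ((2:ℝ)^(-(n:ℝ)))^k) :=
      (summable_geometric_of_lt_one hgeo0 hhalf).mul_left _
    have hgsum : Summable (fun jj : ℤ => if jj ≤ j' then K * (2:ℝ)^((jj:ℝ)*(n:ℝ)) else 0) := by
      rw [← Function.Injective.summable_iff hi hrange]
      exact hgsumN.congr fun k => (hcomp k).symm
    have htsum_eq : (∑' jj : ℤ, if jj ≤ j' then K * (2:ℝ)^((jj:ℝ)*(n:ℝ)) else 0)
        = K * (2:ℝ)^((j':ℝ)*(n:ℝ)) * c := by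
      calc (∑' jj : ℤ, if jj ≤ j' then K * (2:ℝ)^((jj:ℝ)*(n:ℝ)) else 0)
          = ∑' k : ℕ, (if (j' - (k:ℤ)) ≤ j' then
              K * (2:ℝ)^(((j' - (k:ℤ) : ℤ):ℝ)*(n:ℝ)) else 0) :=
            (Function.Injective.tsum_eq hi (fun jj hjj => by
              by_contra h
              exact hjj (hrange jj h))).symm
        _ = ∑' k : ℕ, (K * (2:ℝ)^((j':ℝ)*(n:ℝ))) * ((2:ℝ)^(-(n:ℝ)))^k := tsum_congr hcomp
        _ = (K * (2:ℝ)^((j':ℝ)*(n:ℝ))) * ∑' k : ℕ, ((2:ℝ)^(-(n:ℝ)))^k := tsum_mul_left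
        _ = K * (2:ℝ)^((j':ℝ)*(n:ℝ)) * c := by
            rw [tsum_geometric_of_lt_one hgeo0 hhalf]
    have hnormf : ∀ j : ℤ, ‖(if j ≤ j' then
          (∫ y, (S j x y - S (j-1) x y) * b₁ y *
            (∑ l ∈ Finset.Icc (-(N:ℤ)) (N:ℤ), (S (j+l) y v - S (j+l-1) y v)))
        else 0 : ℂ)‖ ≤ (if j ≤ j' then K * (2:ℝ)^((j:ℝ)*(n:ℝ)) else 0) := by
      intro j
      by_cases hj : j ≤ j'
      · rw [if_pos hj, if_pos hj]; exact hterm j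
      · rw [if_neg hj, if_neg hj, norm_zero]
    have hsumnorm : Summable (fun j : ℤ => ‖(if j ≤ j' then
          (∫ y, (S j x y - S (j-1) x y) * b₁ y *
            (∑ l ∈ Finset.Icc (-(N:ℤ)) (N:ℤ), (S (j+l) y v - S (j+l-1) y v)))
        else 0 : ℂ)‖) :=
      Summable.of_nonneg_of_le (fun _ => norm_nonneg _) hnormf hgsum
    have h1 := norm_tsum_le_tsum_norm hsumnorm
    have h2 : (∑' j : ℤ, ‖(if j ≤ j' then
          (∫ y, (S j x y - S (j-1) x y) * b₁ y *
            (∑ l ∈ Finset.Icc (-(N:ℤ)) (N:ℤ), (S (j+l) y v - S (j+l-1) y v)))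
        else 0 : ℂ)‖) ≤ K * (2:ℝ)^((j':ℝ)*(n:ℝ)) * c := by
      rw [← htsum_eq]
      exact Summable.tsum_le_tsum hnormf hsumnorm hgsum
    -- compare with the right-hand side
    have ht0 : 0 ≤ (2:ℝ)^((j':ℝ)) * ‖x - v‖ := by positivity
    have ht1 : (2:ℝ)^((j':ℝ)) * ‖x - v‖ ≤ 1 := by
      have h3 := mul_le_mul_of_nonneg_left hxv
        (le_of_lt (Real.rpow_pos_of_pos two_pos ((j':ℝ))))
      calc (2:ℝ)^((j':ℝ)) * ‖x - v‖ ≤ (2:ℝ)^((j':ℝ)) * (2:ℝ)^(-(j':ℝ)) := h3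
        _ = 1 := by rw [← Real.rpow_add two_pos]; norm_num
    have hdpos : (0:ℝ) < (1 + (2:ℝ)^((j':ℝ)) * ‖x - v‖) ^ ((n:ℝ)+ε) :=
      Real.rpow_pos_of_pos (by linarith) _
    have hden : (1 + (2:ℝ)^((j':ℝ)) * ‖x - v‖) ^ ((n:ℝ)+ε) ≤ (2:ℝ)^((n:ℝ)+1) := by
      calc (1 + (2:ℝ)^((j':ℝ)) * ‖x - v‖) ^ ((n:ℝ)+ε) ≤ (2:ℝ) ^ ((n:ℝ)+ε) :=
            Real.rpow_le_rpow (by linarith) (by linarith) (by positivity)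
        _ ≤ (2:ℝ)^((n:ℝ)+1) := hmono _ _ (by linarith)
    have hp2 : (0:ℝ) < (2:ℝ)^((j':ℝ)*(n:ℝ)) := Real.rpow_pos_of_pos two_pos _
    have hp3 : (0:ℝ) < (2:ℝ)^((n:ℝ)+1) := Real.rpow_pos_of_pos two_pos _
    have hfin : K * (2:ℝ)^((j':ℝ)*(n:ℝ)) * c ≤
        (K*c+1)*(2:ℝ)^((n:ℝ)+1) * (2:ℝ)^((j':ℝ)*(n:ℝ)) /
          (1 + (2:ℝ)^((j':ℝ)) * ‖x - v‖) ^ ((n:ℝ)+ε) := by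
      have step1 : (K*c+1)*(2:ℝ)^((n:ℝ)+1) * (2:ℝ)^((j':ℝ)*(n:ℝ)) / (2:ℝ)^((n:ℝ)+1) ≤
          (K*c+1)*(2:ℝ)^((n:ℝ)+1) * (2:ℝ)^((j':ℝ)*(n:ℝ)) /
            (1 + (2:ℝ)^((j':ℝ)) * ‖x - v‖) ^ ((n:ℝ)+ε) := by
        gcongr
      have step2 : (K*c+1)*(2:ℝ)^((n:ℝ)+1) * (2:ℝ)^((j':ℝ)*(n:ℝ)) / (2:ℝ)^((n:ℝ)+1) =
          (K*c+1) * (2:ℝ)^((j':ℝ)*(n:ℝ)) := by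
        field_simp
      rw [step2] at step1
      nlinarith
    calc ‖∑' j : ℤ, (if j ≤ j' then
          (∫ y, (S j x y - S (j-1) x y) * b₁ y *
            (∑ l ∈ Finset.Icc (-(N:ℤ)) (N:ℤ), (S (j+l) y v - S (j+l-1) y v)))
        else 0 : ℂ)‖ ≤ _ := h1
      _ ≤ K * (2:ℝ)^((j':ℝ)*(n:ℝ)) * c := h2
      _ ≤ _ := hfin
end
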